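/- arXiv:cs/0110059 — 8 statements merged into one kernel-verified Lean document; each statement's English description precedes it below -/
import Mathlib

section
/- Let p₀,…,p_{n−1} (n ≥ 2) be an orthogonal path on the unit sphere in ℝ³ whose first point p₀ is a coordinate point and whose second point p₁ is also a coordinate point (so the first arc is a coordinate arc). Then the last point p_{n−1} is also a coordinate point. -/
open scoped RealInnerProductSpace

/-- A coordinate point on the unit sphere: one of the six unit vectors
`±e₀, ±e₁, ±e₂`, where `e j = EuclideanSpace.single j 1`. -/
def IsCoordPoint (x : EuclideanSpace ℝ (Fin 3)) : Prop :=
  ∃ j : Fin 3, x = EuclideanSpace.single j (1 : ℝ) ∨ x = -EuclideanSpace.single j (1 : ℝ)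

/-!
Along an orthogonal path, if the arc `p k, p (k+1)` joins two coordinate points `±e_b, ±e_a`
(necessarily `a ≠ b`), then `p (k+2)` is again a coordinate point: either
`⟪p k, p (k+2)⟫ = ±1`, and `p (k+2) = ±p k` by the equality case of Cauchy–Schwarz, or
`p (k+2)` is orthogonal to both `e_a` and `e_b`, and is then `±e_c` for the third axis `c`.
Induction along the path carries this from the first arc to the last point.
-/

theorem eq_or_eq_neg_of_abs_real_inner_eq_one {E : Type*} [NormedAddCommGroup E]
    [InnerProductSpace ℝ E] {x y : E} (hx : ‖x‖ = 1) (hy : ‖y‖ = 1) (h : |⟪x, y⟫| = 1) :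
    y = x ∨ y = -x := by
  rcases abs_eq zero_le_one |>.mp h with h | h
  · exact .inl ((inner_eq_one_iff_of_norm_eq_one hx hy).mp h).symm
  · exact .inr (neg_eq_iff_eq_neg.mp ((inner_eq_neg_one_iff_of_norm_eq_one hx hy).mp h).symm)

theorem Fin.exists_forall_ne_eq_or_eq {a b : Fin 3} (hab : a ≠ b) :
    ∃ c, ∀ i ≠ c, i = a ∨ i = b := by
  revert a b
  decide

namespace IsCoordPoint

variable {u w x : EuclideanSpace ℝ (Fin 3)}

theorem single (j : Fin 3) : IsCoordPoint (EuclideanSpace.single j 1) := ⟨j, .inl rfl⟩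

theorem neg (hu : IsCoordPoint u) : IsCoordPoint (-u) := by
  obtain ⟨j, rfl | rfl⟩ := hu
  exacts [⟨j, .inr rfl⟩, ⟨j, .inl (neg_neg _)⟩]

theorem norm_eq_one (hu : IsCoordPoint u) : ‖u‖ = 1 := by
  obtain ⟨j, rfl | rfl⟩ := hu <;> simp

theorem exists_abs_inner_eq (hu : IsCoordPoint u) : ∃ j, ∀ v, |⟪u, v⟫| = |v j| := by
  obtain ⟨j, rfl | rfl⟩ := hu <;> exact ⟨j, fun v => by simp [EuclideanSpace.inner_single_left]⟩

theorem of_abs_inner_eq_one (hu : IsCoordPoint u) (hx : ‖x‖ = 1) (h : |⟪u, x⟫| = 1) :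
    IsCoordPoint x := by
  rcases eq_or_eq_neg_of_abs_real_inner_eq_one hu.norm_eq_one hx h with rfl | rfl
  exacts [hu, hu.neg]

theorem of_apply_eq_zero (hx : ‖x‖ = 1) (c : Fin 3) (h : ∀ i ≠ c, x i = 0) :
    IsCoordPoint x := by
  have hxc : x = EuclideanSpace.single c (x c) := by
    ext i
    by_cases hi : i = c
    · simp [hi]
    · simp [hi, h i hi]
  refine (single c).of_abs_inner_eq_one hx ?_
  calc |⟪EuclideanSpace.single c 1, x⟫| = ‖EuclideanSpace.single c (x c)‖ := by
        simp [EuclideanSpace.inner_single_left]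
    _ = 1 := by rw [← hxc, hx]

theorem of_inner_mem (hu : IsCoordPoint u) (hw : IsCoordPoint w) (huw : ⟪u, w⟫ = 0)
    (hx : ‖x‖ = 1) (hux : ⟪u, x⟫ ∈ ({-1, 0, 1} : Set ℝ)) (hwx : ⟪w, x⟫ = 0) :
    IsCoordPoint x := by
  obtain hux | hux | hux := hux
  · exact hu.of_abs_inner_eq_one hx (by rw [hux, abs_neg, abs_one])
  · obtain ⟨a, ha⟩ := hu.exists_abs_inner_eq
    obtain ⟨b, hb⟩ := hw.exists_abs_inner_eq
    have hab : a ≠ b := by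
      rintro rfl
      have hwa := hb w
      rw [← ha w, huw, real_inner_self_eq_norm_sq, hw.norm_eq_one] at hwa
      norm_num at hwa
    obtain ⟨c, hc⟩ := Fin.exists_forall_ne_eq_or_eq hab
    refine of_apply_eq_zero hx c fun i hi => ?_
    rcases hc i hi with rfl | rfl
    · exact abs_eq_zero.mp (by rw [← ha x, hux, abs_zero])
    · exact abs_eq_zero.mp (by rw [← hb x, hwx, abs_zero])
  · exact hu.of_abs_inner_eq_one hx (by rw [hux, abs_one])

end IsCoordPoint

theorem orthogonal_path_coord_endpoint_general
    (n : ℕ) (p : ℕ → EuclideanSpace ℝ (Fin 3))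
    (hunit : ∀ i < n, ‖p i‖ = 1)
    (horth : ∀ i, i + 1 < n → ⟪p i, p (i + 1)⟫ = 0)
    (hrect : ∀ i, 0 < i → i + 1 < n →
      ⟪p (i - 1), p (i + 1)⟫ ∈ ({-1, 0, 1} : Set ℝ))
    (h0 : IsCoordPoint (p 0)) (h1 : IsCoordPoint (p 1)) :
    IsCoordPoint (p (n - 1)) := by
  have harc : ∀ k, k + 1 < n → IsCoordPoint (p k) ∧ IsCoordPoint (p (k + 1)) := by
    intro k
    induction k with
    | zero => exact fun _ => ⟨h0, h1⟩
    | succ k ih =>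
      intro hk
      obtain ⟨hpk, hpk₁⟩ := ih (by omega)
      refine ⟨hpk₁, hpk.of_inner_mem hpk₁ (horth k (by omega)) (hunit _ hk) ?_ (horth _ hk)⟩
      simpa using hrect (k + 1) k.succ_pos hk
  obtain hn | hn := Nat.lt_or_ge 1 n
  · simpa [show n - 2 + 1 = n - 1 by omega] using (harc (n - 2) (by omega)).2
  · rwa [Nat.sub_eq_zero_of_le hn]

/-- An orthogonal path `p 0, …, p (n-1)` on the unit sphere (an injective sequence of
unit vectors with consecutive points orthogonal and all interior angles rectilinear)
whose first point `p 0` is a coordinate point and whose second point `p 1` is also a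
coordinate point (so the first arc is a coordinate arc) must end at a coordinate
point `p (n-1)`. -/
theorem orthogonal_path_coord_endpoint
    (n : ℕ) (hn : 2 ≤ n) (p : ℕ → EuclideanSpace ℝ (Fin 3))
    (hunit : ∀ i < n, ‖p i‖ = 1)
    (hinj : ∀ i < n, ∀ j < n, p i = p j → i = j)
    (horth : ∀ i, i + 1 < n → ⟪p i, p (i + 1)⟫ = 0)
    (hrect : ∀ i, 0 < i → i + 1 < n →
      ⟪p (i - 1), p (i + 1)⟫ ∈ ({-1, 0, 1} : Set ℝ))
    (h0 : IsCoordPoint (p 0)) (h1 : IsCoordPoint (p 1)) :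
    IsCoordPoint (p (n - 1)) :=
  orthogonal_path_coord_endpoint_general n p hunit horth hrect h0 h1
end

section
/- If two unit vectors p₀ and p_{n−1} in ℝ³ are the endpoints of an orthogonal path p₀,…,p_{n−1} (n ≥ 2) on the unit sphere, then their geodesic separation is a multiple of π/2; that is, either p_{n−1} = −p₀ (they are antipodal) or ⟪p₀, p_{n−1}⟫ = 0 (they form a quarter pair). -/
open scoped RealInnerProductSpace

/-!
Along an orthogonal path, `p (i + 2)` is `±p i` or orthogonal to `p i`; in the latter case it
is orthogonal to the plane of `p i` and `p (i + 1)`. By induction each of `p i`, `p (i + 1)` is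
`±p 0` or orthogonal to `p 0`: if one of them is `±p 0`, then `p (i + 2) ⊥ p 0`; otherwise
`p 0` is also orthogonal to that plane, and in dimension three this forces `p (i + 2) = ±p 0`.
Injectivity finally excludes `p (n - 1) = p 0`.
-/

section
variable {E : Type*} [NormedAddCommGroup E] [InnerProductSpace ℝ E]

/-- For unit vectors, the geodesic separation of `a` and `x` is `0`, `π` or `π/2`. -/
def RectilinearTo (a x : E) : Prop :=
  x = a ∨ x = -a ∨ ⟪a, x⟫ = 0

theorem rectilinearTo_of_inner_mem {x y : E} (hx : ‖x‖ = 1) (hy : ‖y‖ = 1)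
    (h : ⟪x, y⟫ ∈ ({-1, 0, 1} : Set ℝ)) : RectilinearTo x y := by
  rcases h with h | h | h
  · exact .inr (.inl ((inner_eq_neg_one_iff_of_norm_eq_one hy hx).mp (real_inner_comm x y ▸ h)))
  · exact .inr (.inr h)
  · exact .inl ((inner_eq_one_iff_of_norm_eq_one hy hx).mp (real_inner_comm x y ▸ h))

theorem eq_or_eq_neg_of_inner_eq_zero_of_finrank_eq_three (hE : Module.finrank ℝ E = 3)
    {u v w z : E} (hu : ‖u‖ = 1) (hv : ‖v‖ = 1) (hw : ‖w‖ = 1) (hz : ‖z‖ = 1)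
    (huv : ⟪u, v⟫ = 0) (huw : ⟪u, w⟫ = 0) (hvw : ⟪v, w⟫ = 0)
    (huz : ⟪u, z⟫ = 0) (hvz : ⟪v, z⟫ = 0) : z = w ∨ z = -w := by
  have : FiniteDimensional ℝ E := Module.finite_of_finrank_eq_succ hE
  have hon : Orthonormal ℝ ![u, v, w] := by
    rw [orthonormal_iff_ite]
    intro i j
    fin_cases i <;> fin_cases j <;> simp [hu, hv, hw, huv, huw, hvw,
      real_inner_comm u, real_inner_comm v]
  let b := (basisOfOrthonormalOfCardEqFinrank hon (by simp [hE])).toOrthonormalBasis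
    (by rw [coe_basisOfOrthonormalOfCardEqFinrank]; exact hon)
  have hzw : z = ⟪w, z⟫ • w := by
    simpa [b, Fin.sum_univ_three, huz, hvz] using (b.sum_repr' z).symm
  have habs : |⟪w, z⟫| = 1 := by
    simpa [norm_smul, hw, hz] using (congrArg norm hzw).symm
  rcases abs_eq zero_le_one |>.mp habs with h | h
  · exact .inl (by rw [hzw, h, one_smul])
  · exact .inr (by rw [hzw, h, neg_one_smul])

theorem RectilinearTo.neg {a x : E} (h : RectilinearTo a x) : RectilinearTo a (-x) := by
  rcases h with rfl | rfl | h
  · exact .inr (.inl rfl)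
  · exact .inl (neg_neg a)
  · exact .inr (.inr (by rw [inner_neg_right, h, neg_zero]))

theorem RectilinearTo.inner_eq_zero_or_of_inner_eq_zero {a x z : E} (h : RectilinearTo a x)
    (hxz : ⟪x, z⟫ = 0) : ⟪a, z⟫ = 0 ∨ ⟪a, x⟫ = 0 := by
  rcases h with rfl | rfl | h
  · exact .inl hxz
  · exact .inl (by rwa [inner_neg_left, neg_eq_zero] at hxz)
  · exact .inr h

theorem RectilinearTo.of_orthogonal (hE : Module.finrank ℝ E = 3) {a x y z : E}
    (ha : ‖a‖ = 1) (hx : ‖x‖ = 1) (hy : ‖y‖ = 1) (hz : ‖z‖ = 1)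
    (hxy : ⟪x, y⟫ = 0) (hxz : ⟪x, z⟫ = 0) (hyz : ⟪y, z⟫ = 0)
    (hax : RectilinearTo a x) (hay : RectilinearTo a y) : RectilinearTo a z := by
  rcases hax.inner_eq_zero_or_of_inner_eq_zero hxz with haz | hax'
  · exact .inr (.inr haz)
  rcases hay.inner_eq_zero_or_of_inner_eq_zero hyz with haz | hay'
  · exact .inr (.inr haz)
  -- `a` and `z` are both unit normals of the plane of `x` and `y`
  rcases eq_or_eq_neg_of_inner_eq_zero_of_finrank_eq_three hE hx hy hz ha hxy hxz hyz
    (real_inner_comm a x ▸ hax') (real_inner_comm a y ▸ hay') with rfl | rfl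
  · exact .inl rfl
  · exact .inr (.inl (neg_neg z).symm)

theorem RectilinearTo.of_rectilinear_step (hE : Module.finrank ℝ E = 3) {a x y z : E}
    (ha : ‖a‖ = 1) (hx : ‖x‖ = 1) (hy : ‖y‖ = 1) (hz : ‖z‖ = 1)
    (hxy : ⟪x, y⟫ = 0) (hyz : ⟪y, z⟫ = 0) (hxz : ⟪x, z⟫ ∈ ({-1, 0, 1} : Set ℝ))
    (hax : RectilinearTo a x) (hay : RectilinearTo a y) : RectilinearTo a z := by
  rcases rectilinearTo_of_inner_mem hx hz hxz with rfl | rfl | hxz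
  · exact hax
  · exact hax.neg
  · exact .of_orthogonal hE ha hx hy hz hxy hxz hyz hax hay

theorem rectilinearTo_of_rectilinear_path (hE : Module.finrank ℝ E = 3) {n : ℕ} {p : ℕ → E}
    (hunit : ∀ i < n, ‖p i‖ = 1)
    (horth : ∀ i, i + 1 < n → ⟪p i, p (i + 1)⟫ = 0)
    (hrect : ∀ i, 0 < i → i + 1 < n → ⟪p (i - 1), p (i + 1)⟫ ∈ ({-1, 0, 1} : Set ℝ)) :
    ∀ i < n, RectilinearTo (p 0) (p i) := by
  suffices ∀ i, i + 1 < n → RectilinearTo (p 0) (p i) ∧ RectilinearTo (p 0) (p (i + 1)) by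
    intro i hi
    cases i with
    | zero => exact .inl rfl
    | succ i => exact (this i hi).2
  intro i
  induction i with
  | zero => exact fun h => ⟨.inl rfl, .inr (.inr (horth 0 h))⟩
  | succ i ih =>
    intro hi
    have ⟨hpi, hpi'⟩ := ih (by omega)
    refine ⟨hpi', .of_rectilinear_step hE (hunit 0 (by omega)) (hunit i (by omega))
      (hunit (i + 1) (by omega)) (hunit (i + 2) hi) (horth i (by omega)) (horth (i + 1) hi)
      (hrect (i + 1) (by omega) hi) hpi hpi'⟩

end

/-- If two unit vectors `p 0` and `p (n-1)` are the endpoints of an orthogonal path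
`p 0, …, p (n-1)` on the unit sphere (an injective sequence of unit vectors with
consecutive points orthogonal and all interior angles rectilinear), then their
geodesic separation is a multiple of `π/2`: either they are antipodal,
`p (n-1) = -p 0`, or they form a quarter pair, `⟪p 0, p (n-1)⟫ = 0`. -/
theorem orthogonal_path_endpoints_antipodal_or_quarter
    (n : ℕ) (hn : 2 ≤ n) (p : ℕ → EuclideanSpace ℝ (Fin 3))
    (hunit : ∀ i < n, ‖p i‖ = 1)
    (hinj : ∀ i < n, ∀ j < n, p i = p j → i = j)
    (horth : ∀ i, i + 1 < n → ⟪p i, p (i + 1)⟫ = 0)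
    (hrect : ∀ i, 0 < i → i + 1 < n →
      ⟪p (i - 1), p (i + 1)⟫ ∈ ({-1, 0, 1} : Set ℝ)) :
    p (n - 1) = -p 0 ∨ ⟪p 0, p (n - 1)⟫ = 0 := by
  rcases rectilinearTo_of_rectilinear_path finrank_euclideanSpace_fin hunit horth hrect
    (n - 1) (by omega) with h | h | h
  · exact absurd (hinj (n - 1) (by omega) 0 (by omega) h) (by omega)
  · exact .inl h
  · exact .inr h
end

section
/- Let p₀,…,p_{n−1} (n ≥ 2) be an orthogonal path on the unit sphere in ℝ³ whose endpoints form a quarter pair, ⟪p₀, p_{n−1}⟫ = 0, and let a be the great-circle arc of length π/2 joining p₀ to p_{n−1}. Then the path makes a rectilinear angle with a at both endpoints: since the tangent direction of a at p₀ is p_{n−1} and its tangent direction at p_{n−1} is p₀, this means ⟪p₁, p_{n−1}⟫ ∈ {−1, 0, 1} and ⟪p_{n−2}, p₀⟫ ∈ {−1, 0, 1}. -/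
open scoped RealInnerProductSpace

lemma key (u v x y : EuclideanSpace ℝ (Fin 3))
    (hu : ‖u‖ = 1) (hv : ‖v‖ = 1) (hx : ‖x‖ = 1) (hy : ‖y‖ = 1)
    (huv : ⟪u,v⟫ = 0) (hux : ⟪u,x⟫ = 0) (hvx : ⟪v,x⟫ = 0)
    (huy : ⟪u,y⟫ = 0) (hvy : ⟪v,y⟫ = 0) :
    ⟪x,y⟫ = -1 ∨ ⟪x,y⟫ = 1 := by
  have hxx : ⟪x,x⟫ = 1 := by rw [real_inner_self_eq_norm_mul_norm, hx]; ring
  have huu : ⟪u,u⟫ = 1 := by rw [real_inner_self_eq_norm_mul_norm, hu]; ring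
  have hvv : ⟪v,v⟫ = 1 := by rw [real_inner_self_eq_norm_mul_norm, hv]; ring
  have hvu : ⟪v,u⟫ = 0 := by rw [real_inner_comm]; exact huv
  have hxu : ⟪x,u⟫ = 0 := by rw [real_inner_comm]; exact hux
  have hxv : ⟪x,v⟫ = 0 := by rw [real_inner_comm]; exact hvx
  set f : Fin 3 → EuclideanSpace ℝ (Fin 3) := ![u, v, x] with hf
  have honf : Orthonormal ℝ f := by
    rw [orthonormal_iff_ite]
    intro i j
    fin_cases i <;> fin_cases j <;>
      simp [f, -PiLp.inner_apply, Fin.ext_iff, huv, hux, hvx, huu, hvv, hxx, hvu, hxu, hxv, hu, hv, hx]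
  have hspan : Submodule.span ℝ (Set.range f) = ⊤ :=
    honf.linearIndependent.span_eq_top_of_card_eq_finrank (by simp)
  set z : EuclideanSpace ℝ (Fin 3) := y - ⟪x,y⟫ • x with hz
  have hzmem : z ∈ (Submodule.span ℝ (Set.range f))ᗮ := by
    rw [Submodule.mem_orthogonal]
    intro w hw
    induction hw using Submodule.span_induction with
    | mem w hw =>
        obtain ⟨i, rfl⟩ := hw
        fin_cases i <;>
          simp [f, -PiLp.inner_apply, hz, inner_sub_right, real_inner_smul_right,
            huy, hvy, hux, hvx, hxx, hx]
    | zero => simp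
    | add _ _ _ _ h1 h2 => simp only [inner_add_left, h1, h2, add_zero]
    | smul c _ _ h => simp only [real_inner_smul_left, h, mul_zero]
  rw [hspan, Submodule.top_orthogonal_eq_bot, Submodule.mem_bot] at hzmem
  have hyx : y = ⟪x,y⟫ • x := sub_eq_zero.mp hzmem
  have hnorm : |⟪x,y⟫| = 1 := by
    have h2 : ‖y‖ = ‖⟪x,y⟫ • x‖ := by rw [← hyx]
    rwa [norm_smul, hx, mul_one, hy, Real.norm_eq_abs, eq_comm] at h2
  rcases (abs_eq (by norm_num : (0:ℝ) ≤ 1)).mp hnorm with h | h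
  · right; exact h
  · left; exact h

lemma neg_one_eq {a b : EuclideanSpace ℝ (Fin 3)} (ha : ‖a‖ = 1) (hb : ‖b‖ = 1)
    (h : ⟪a,b⟫ = -1) : b = -a := by
  have hb' : ‖-b‖ = 1 := by rwa [norm_neg]
  have : ⟪a, -b⟫ = 1 := by rw [inner_neg_right, h]; ring
  have := (inner_eq_one_iff_of_norm_eq_one ha hb').mp this
  rw [this]; simp

lemma step (A B C q : EuclideanSpace ℝ (Fin 3))
    (hA : ‖A‖ = 1) (hB : ‖B‖ = 1) (hC : ‖C‖ = 1) (hq : ‖q‖ = 1)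
    (hAB : ⟪A,B⟫ = 0) (hBC : ⟪B,C⟫ = 0)
    (hAC : ⟪A,C⟫ ∈ ({-1, 0, 1} : Set ℝ))
    (hAq : ⟪A,q⟫ ∈ ({-1, 0, 1} : Set ℝ))
    (hBq : ⟪B,q⟫ ∈ ({-1, 0, 1} : Set ℝ)) :
    ⟪C,q⟫ ∈ ({-1, 0, 1} : Set ℝ) := by
  simp only [Set.mem_insert_iff, Set.mem_singleton_iff] at *
  rcases hAC with h | h | h
  · -- C = -A
    have hCA : C = -A := neg_one_eq hA hC h
    rw [hCA, inner_neg_left]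
    rcases hAq with h' | h' | h' <;> simp [h']
  · -- ⟪A,C⟫ = 0
    rcases hAq with ha | ha | ha
    · -- q = -A
      have : q = -A := neg_one_eq hA hq ha
      rw [this, inner_neg_right, real_inner_comm, h]; norm_num
    · rcases hBq with hb | hb | hb
      · have : q = -B := neg_one_eq hB hq hb
        rw [this, inner_neg_right, real_inner_comm, hBC]; norm_num
      · rcases key A B C q hA hB hC hq hAB h hBC ha hb with h' | h'
        · exact Or.inl h'
        · exact Or.inr (Or.inr h')
      · have : B = q := (inner_eq_one_iff_of_norm_eq_one hB hq).mp hb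
        rw [← this, real_inner_comm, hBC]; norm_num
    · -- A = q
      have : A = q := (inner_eq_one_iff_of_norm_eq_one hA hq).mp ha
      rw [← this, real_inner_comm, h]; norm_num
  · -- A = C
    have : A = C := (inner_eq_one_iff_of_norm_eq_one hA hC).mp h
    rw [← this]
    tauto

/-- Let `p 0, …, p (n-1)` be an orthogonal path on the unit sphere (an injective
sequence of unit vectors with consecutive points orthogonal and all interior angles
rectilinear) whose endpoints form a quarter pair, `⟪p 0, p (n-1)⟫ = 0`, and let `a`
be the `π/2`-arc joining `p 0` to `p (n-1)`.  Then the path makes a rectilinear angle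
with `a` at both endpoints: since the tangent direction of `a` at `p 0` is `p (n-1)`
and its tangent direction at `p (n-1)` is `p 0`, this means
`⟪p 1, p (n-1)⟫ ∈ {-1, 0, 1}` and `⟪p (n-2), p 0⟫ ∈ {-1, 0, 1}`. -/
theorem orthogonal_path_quarter_pair_rectilinear_angles
    (n : ℕ) (hn : 2 ≤ n) (p : ℕ → EuclideanSpace ℝ (Fin 3))
    (hunit : ∀ i < n, ‖p i‖ = 1)
    (hinj : ∀ i < n, ∀ j < n, p i = p j → i = j)
    (horth : ∀ i, i + 1 < n → ⟪p i, p (i + 1)⟫ = 0)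
    (hrect : ∀ i, 0 < i → i + 1 < n →
      ⟪p (i - 1), p (i + 1)⟫ ∈ ({-1, 0, 1} : Set ℝ))
    (hquarter : ⟪p 0, p (n - 1)⟫ = 0) :
    ⟪p 1, p (n - 1)⟫ ∈ ({-1, 0, 1} : Set ℝ) ∧
      ⟪p (n - 2), p 0⟫ ∈ ({-1, 0, 1} : Set ℝ) := by
  have claim : ∀ i, i < n →
      ⟪p i, p 0⟫ ∈ ({-1, 0, 1} : Set ℝ) ∧ ⟪p i, p 1⟫ ∈ ({-1, 0, 1} : Set ℝ) := by
    intro i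
    induction i using Nat.strong_induction_on with
    | _ i ih =>
      intro hi
      match i with
      | 0 =>
        refine ⟨?_, ?_⟩
        · have := hunit 0 (by omega)
          have : ⟪p 0, p 0⟫ = 1 := by rw [real_inner_self_eq_norm_mul_norm, this]; ring
          simp [this, hunit 0 (by omega)]
        · have := horth 0 (by omega)
          simp [this]
      | 1 =>
        refine ⟨?_, ?_⟩
        · have := horth 0 (by omega)
          rw [real_inner_comm] at this
          simp [this]
        · have := hunit 1 (by omega)
          have : ⟪p 1, p 1⟫ = 1 := by rw [real_inner_self_eq_norm_mul_norm, this]; ring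
          simp [this, hunit 1 (by omega)]
      | k + 2 =>
        have ihk := ih k (by omega) (by omega)
        have ihk1 := ih (k+1) (by omega) (by omega)
        have hAC : ⟪p k, p (k+2)⟫ ∈ ({-1, 0, 1} : Set ℝ) := by
          have := hrect (k+1) (by omega) (by omega)
          simpa using this
        constructor
        · exact step (p k) (p (k+1)) (p (k+2)) (p 0)
            (hunit k (by omega)) (hunit (k+1) (by omega)) (hunit (k+2) (by omega))
            (hunit 0 (by omega)) (horth k (by omega)) (horth (k+1) (by omega))
            hAC ihk.1 ihk1.1
        · exact step (p k) (p (k+1)) (p (k+2)) (p 1)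
            (hunit k (by omega)) (hunit (k+1) (by omega)) (hunit (k+2) (by omega))
            (hunit 1 (by omega)) (horth k (by omega)) (horth (k+1) (by omega))
            hAC ihk.2 ihk1.2
  constructor
  · have := (claim (n-1) (by omega)).2
    rwa [real_inner_comm] at this
  · exact (claim (n-2) (by omega)).1
end

section
/- No closed π/2-polygon on the unit sphere in ℝ³ has exactly one red vertex. Equivalently: at a vertex of a polyhedron all of whose faces are rectangles, it is impossible for exactly one incident edge to have a dihedral angle that is not a multiple of π/2. -/
/-!
Attach to each edge `(p i, p (i + 1))` its frame: the six unit vectors `±p i`, `±p (i + 1)`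
and `±p i × p (i + 1)`. At a green vertex the next point is `±` the previous one or the cross
product of the edge, so the two edges meeting there have the same frame. If `r` were the only
red vertex, walking once around the polygon through all other vertices would show that the
two edges at `r` share a frame; then `p (r + 1)` lies in the frame of `(p (r - 1), p r)`, which
forces `⟪p (r - 1), p (r + 1)⟫ ∈ {-1, 0, 1}`, i.e. `r` is green.
-/

open scoped RealInnerProductSpace

namespace ZMod

theorem apply_eq_apply_add_one_of_forall_ne {n : ℕ} [NeZero n] {α : Type*}
    (f : ZMod n → α) (j : ZMod n) (h : ∀ i, i ≠ j → f i = f (i + 1)) :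
    f j = f (j + 1) := by
  have walk : ∀ k : ℕ, k < n → f (j + 1) = f (j + 1 + k) := by
    intro k hk
    induction k with
    | zero => simp
    | succ k ih =>
      have hne : j + 1 + k ≠ j := by
        intro heq
        have : ((k + 1 : ℕ) : ZMod n) = 0 := by push_cast; linear_combination heq
        rw [ZMod.natCast_eq_zero_iff] at this
        exact absurd (Nat.le_of_dvd k.succ_pos this) (by omega)
      rw [ih (by omega), h _ hne]
      push_cast
      ring_nf
  have := walk (n - 1) (Nat.sub_lt (NeZero.pos n) one_pos)
  rw [Nat.cast_pred (NeZero.pos n), ZMod.natCast_self] at this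
  simpa using this.symm

end ZMod

section

variable {E : Type*} [NormedAddCommGroup E] [InnerProductSpace ℝ E]

theorem Orthonormal.of_three {a b c : E} (ha : ‖a‖ = 1) (hb : ‖b‖ = 1) (hc : ‖c‖ = 1)
    (hab : ⟪a, b⟫ = 0) (hac : ⟪a, c⟫ = 0) (hbc : ⟪b, c⟫ = 0) :
    Orthonormal ℝ ![a, b, c] := by
  refine ⟨fun i => by fin_cases i <;> simpa, fun i j hij => ?_⟩
  fin_cases i <;> fin_cases j <;> simp_all [real_inner_comm]

theorem eq_or_eq_neg_of_inner_eq_zero (hE : Module.finrank ℝ E = 3) {a b c v : E}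
    (hon : Orthonormal ℝ ![a, b, c]) (hv : ‖v‖ = 1) (hav : ⟪a, v⟫ = 0) (hbv : ⟪b, v⟫ = 0) :
    v = c ∨ v = -c := by
  have hspan := hon.linearIndependent.span_eq_top_of_card_eq_finrank (by simp [hE])
  have hv_eq : v = ⟪c, v⟫ • c := by
    simpa [Fin.sum_univ_three, hav, hbv] using
      ((OrthonormalBasis.mk hon hspan.ge).sum_repr' v).symm
  have hcoeff : |⟪c, v⟫| = 1 := by
    have hc : ‖c‖ = 1 := hon.1 2
    rw [hv_eq, norm_smul, hc, mul_one] at hv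
    simpa using hv
  rcases abs_eq zero_le_one |>.mp hcoeff with h | h
  · left; rw [hv_eq, h, one_smul]
  · right; rw [hv_eq, h, neg_one_smul]

/-- In three dimensions, for orthonormal `a, b` the second part is `{a × b, -(a × b)}`. -/
def edgeFrame (a b : E) : Set E :=
  {a, -a, b, -b} ∪ {v | ‖v‖ = 1 ∧ ⟪a, v⟫ = 0 ∧ ⟪b, v⟫ = 0}

theorem edgeFrame_comm (a b : E) : edgeFrame a b = edgeFrame b a := by
  ext v
  simp only [edgeFrame, Set.mem_union, Set.mem_insert_iff, Set.mem_singleton_iff,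
    Set.mem_ofPred_eq]
  tauto

theorem edgeFrame_neg_right (a b : E) : edgeFrame a (-b) = edgeFrame a b := by
  ext v
  simp only [edgeFrame, Set.mem_union, Set.mem_insert_iff, Set.mem_singleton_iff,
    Set.mem_ofPred_eq, neg_neg, inner_neg_left, neg_eq_zero]
  tauto

theorem inner_mem_of_mem_edgeFrame {a b v : E} (ha : ‖a‖ = 1) (hab : ⟪a, b⟫ = 0)
    (hv : v ∈ edgeFrame a b) : ⟪a, v⟫ ∈ ({-1, 0, 1} : Set ℝ) := by
  have haa : ⟪a, a⟫ = 1 := by rw [real_inner_self_eq_norm_sq, ha, one_pow]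
  rcases hv with (rfl | rfl | rfl | rfl) | ⟨-, hav, -⟩ <;> simp [*]

theorem edgeFrame_eq_of_orthonormal (hE : Module.finrank ℝ E = 3) {a b c : E}
    (hon : Orthonormal ℝ ![a, b, c]) : edgeFrame a b = {a, -a, b, -b} ∪ {c, -c} := by
  have hc : ‖c‖ = 1 := hon.1 2
  have hac : ⟪a, c⟫ = 0 := hon.2 (i := 0) (j := 2) (by decide)
  have hbc : ⟪b, c⟫ = 0 := hon.2 (i := 1) (j := 2) (by decide)
  rw [edgeFrame]
  congr 1
  ext v
  refine ⟨fun ⟨hv, hav, hbv⟩ => eq_or_eq_neg_of_inner_eq_zero hE hon hv hav hbv, ?_⟩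
  rintro (rfl | rfl)
  · exact ⟨hc, hac, hbc⟩
  · exact ⟨by rwa [norm_neg], by simp [hac], by simp [hbc]⟩

theorem edgeFrame_eq_edgeFrame_of_inner_mem (hE : Module.finrank ℝ E = 3) {a b c : E}
    (ha : ‖a‖ = 1) (hb : ‖b‖ = 1) (hc : ‖c‖ = 1) (hab : ⟪a, b⟫ = 0) (hbc : ⟪b, c⟫ = 0)
    (hac : ⟪a, c⟫ ∈ ({-1, 0, 1} : Set ℝ)) : edgeFrame a b = edgeFrame b c := by
  rcases hac with hac | hac | hac
  · have hca : c = -a := (neg_eq_iff_eq_neg.mpr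
      ((inner_eq_neg_one_iff_of_norm_eq_one ha hc).mp hac)).symm
    rw [hca, edgeFrame_neg_right, edgeFrame_comm]
  · have hba : ⟪b, a⟫ = 0 := by rw [real_inner_comm, hab]
    have hca : ⟪c, a⟫ = 0 := by rw [real_inner_comm, hac]
    rw [edgeFrame_eq_of_orthonormal hE (.of_three ha hb hc hab hac hbc),
      edgeFrame_eq_of_orthonormal hE (.of_three hb hc ha hbc hba hca)]
    ext v
    simp only [Set.mem_union, Set.mem_insert_iff, Set.mem_singleton_iff]
    tauto
  · rw [(inner_eq_one_iff_of_norm_eq_one ha hc).mp hac, edgeFrame_comm]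

end

theorem no_polygon_with_exactly_one_red_vertex_general
    (n : ℕ) (hn : 3 ≤ n) (p : ZMod n → EuclideanSpace ℝ (Fin 3))
    (hunit : ∀ i, ‖p i‖ = 1)
    (horth : ∀ i, ⟪p i, p (i + 1)⟫ = 0) :
    {i : ZMod n | ⟪p (i - 1), p (i + 1)⟫ ∉ ({-1, 0, 1} : Set ℝ)}.ncard ≠ 1 := by
  have : NeZero n := ⟨by omega⟩
  intro hone
  obtain ⟨r, hred⟩ := Set.ncard_eq_one.mp hone
  have hgreen : ∀ i, i ≠ r → ⟪p (i - 1), p (i + 1)⟫ ∈ ({-1, 0, 1} : Set ℝ) := fun i hi => by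
    by_contra h
    exact hi (hred.subset h)
  have hE : Module.finrank ℝ (EuclideanSpace ℝ (Fin 3)) = 3 := finrank_euclideanSpace_fin
  have hstep : ∀ i, i ≠ r - 1 →
      edgeFrame (p i) (p (i + 1)) = edgeFrame (p (i + 1)) (p (i + 1 + 1)) := fun i hi =>
    edgeFrame_eq_edgeFrame_of_inner_mem hE (hunit _) (hunit _) (hunit _) (horth _) (horth _)
      (by simpa using hgreen (i + 1) (by rintro rfl; simp at hi))
  have hframe : edgeFrame (p (r - 1)) (p r) = edgeFrame (p r) (p (r + 1)) := by
    simpa using ZMod.apply_eq_apply_add_one_of_forall_ne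
      (fun i => edgeFrame (p i) (p (i + 1))) (r - 1) hstep
  have hnext : p (r + 1) ∈ edgeFrame (p (r - 1)) (p r) := hframe ▸ by simp [edgeFrame]
  exact hred.symm.subset rfl
    (inner_mem_of_mem_edgeFrame (hunit _) (by simpa using horth (r - 1)) hnext)

/-- No closed `π/2`-polygon on the unit sphere in `ℝ³` (a cyclic sequence
`p : ZMod n → ℝ³`, `n ≥ 3`, of pairwise distinct unit vectors with consecutive
points orthogonal) has exactly one red vertex, i.e. exactly one vertex `i` with
`⟪p (i-1), p (i+1)⟫ ∉ {-1, 0, 1}`. -/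
theorem no_polygon_with_exactly_one_red_vertex
    (n : ℕ) (hn : 3 ≤ n) (p : ZMod n → EuclideanSpace ℝ (Fin 3))
    (hinj : Function.Injective p)
    (hunit : ∀ i, ‖p i‖ = 1)
    (horth : ∀ i, ⟪p i, p (i + 1)⟫ = 0) :
    {i : ZMod n | ⟪p (i - 1), p (i + 1)⟫ ∉ ({-1, 0, 1} : Set ℝ)}.ncard ≠ 1 :=
  no_polygon_with_exactly_one_red_vertex_general n hn p hunit horth
end

section
/- If a closed π/2-polygon on the unit sphere in ℝ³ has exactly two red vertices p_i and p_j, then p_j = −p_i (the two red vertices are antipodal). Equivalently: if exactly two edges with nonrectilinear dihedral angle are incident to a vertex of a polyhedron all of whose faces are rectangles, then those two edges are collinear in ℝ³. -/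
open scoped RealInnerProductSpace

private lemma memT_neg {x : ℝ} (h : x ∈ ({-1, 0, 1} : Set ℝ)) :
    -x ∈ ({-1, 0, 1} : Set ℝ) := by
  simp only [Set.mem_insert_iff, Set.mem_singleton_iff] at h ⊢
  rcases h with rfl | rfl | rfl <;> norm_num

private lemma eq_of_inner_one {u w : EuclideanSpace ℝ (Fin 3)}
    (hu : ‖u‖ = 1) (hw : ‖w‖ = 1) (h : ⟪u, w⟫ = 1) : w = u :=
  ((inner_eq_one_iff_of_norm_eq_one hu hw).mp h).symm

private lemma neg_of_inner_neg_one {u w : EuclideanSpace ℝ (Fin 3)}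
    (hu : ‖u‖ = 1) (hw : ‖w‖ = 1) (h : ⟪u, w⟫ = -1) : w = -u := by
  have h1 : ⟪u, -w⟫ = 1 := by rw [inner_neg_right, h]; norm_num
  have h2 : u = -w := (inner_eq_one_iff_of_norm_eq_one hu (by rw [norm_neg, hw])).mp h1
  rw [h2, neg_neg]

/-- In `ℝ³`, two unit vectors orthogonal to an orthonormal pair agree up to sign. -/
private lemma key3D {a b u v : EuclideanSpace ℝ (Fin 3)}
    (ha : ‖a‖ = 1) (hb : ‖b‖ = 1) (hu : ‖u‖ = 1) (hv : ‖v‖ = 1)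
    (hab : ⟪a, b⟫ = 0) (hua : ⟪u, a⟫ = 0) (hub : ⟪u, b⟫ = 0)
    (hva : ⟪v, a⟫ = 0) (hvb : ⟪v, b⟫ = 0) : v = u ∨ v = -u := by
  have hba : ⟪b, a⟫ = 0 := by rw [real_inner_comm]; exact hab
  have hau : ⟪a, u⟫ = 0 := by rw [real_inner_comm]; exact hua
  have hbu : ⟪b, u⟫ = 0 := by rw [real_inner_comm]; exact hub
  have hav : ⟪a, v⟫ = 0 := by rw [real_inner_comm]; exact hva
  have hbv : ⟪b, v⟫ = 0 := by rw [real_inner_comm]; exact hvb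
  have haa : ⟪a, a⟫ = 1 := by
    rw [real_inner_self_eq_norm_mul_norm, ha]; norm_num
  have hbb : ⟪b, b⟫ = 1 := by
    rw [real_inner_self_eq_norm_mul_norm, hb]; norm_num
  have huu : ⟪u, u⟫ = 1 := by
    rw [real_inner_self_eq_norm_mul_norm, hu]; norm_num
  have hon : Orthonormal ℝ ![a, b, u] := by
    rw [orthonormal_iff_ite]
    intro i j
    fin_cases i <;> fin_cases j <;>
      simp [haa, hbb, huu, hab, hba, hau, hua, hbu, hub, ha, hb, hu]
  have hcard : Fintype.card (Fin 3) = Module.finrank ℝ (EuclideanSpace ℝ (Fin 3)) := by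
    simp
  let Bb : Module.Basis (Fin 3) ℝ (EuclideanSpace ℝ (Fin 3)) :=
    basisOfOrthonormalOfCardEqFinrank hon hcard
  have hBb : ⇑Bb = ![a, b, u] := coe_basisOfOrthonormalOfCardEqFinrank hon hcard
  let B : OrthonormalBasis (Fin 3) ℝ (EuclideanSpace ℝ (Fin 3)) :=
    Bb.toOrthonormalBasis (by rw [hBb]; exact hon)
  have hB : ⇑B = ![a, b, u] := by
    rw [show ⇑B = ⇑Bb from Bb.coe_toOrthonormalBasis _, hBb]
  have hsum := B.sum_repr' v
  rw [hB] at hsum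
  rw [Fin.sum_univ_three] at hsum
  simp only [Matrix.cons_val_zero, Matrix.cons_val_one, Matrix.head_cons,
    Matrix.cons_val_two, Matrix.tail_cons] at hsum
  rw [hav, hbv, zero_smul, zero_smul, zero_add, zero_add] at hsum
  -- v = ⟪u, v⟫ • u
  have hnorm : |⟪u, v⟫| = 1 := by
    have : ‖⟪u, v⟫ • u‖ = 1 := by rw [hsum, hv]
    rwa [norm_smul, hu, mul_one, Real.norm_eq_abs] at this
  rcases abs_eq (by norm_num : (0:ℝ) ≤ 1) |>.mp hnorm with h1 | h1
  · left; rw [← hsum, h1, one_smul]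
  · right; rw [← hsum, h1]; module

/-- The "frame" set: unit vectors commensurable with the orthonormal pair `a, b`. -/
private def SS (a b : EuclideanSpace ℝ (Fin 3)) : Set (EuclideanSpace ℝ (Fin 3)) :=
  {x | ‖x‖ = 1 ∧ ⟪x, a⟫ ∈ ({-1, 0, 1} : Set ℝ) ∧ ⟪x, b⟫ ∈ ({-1, 0, 1} : Set ℝ)}

private lemma inner_memT_of_orth {u v w c : EuclideanSpace ℝ (Fin 3)}
    (hu : ‖u‖ = 1) (hv : ‖v‖ = 1) (hw : ‖w‖ = 1) (hc : ‖c‖ = 1)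
    (huv : ⟪u, v⟫ = 0) (hwu : ⟪w, u⟫ = 0) (hwv : ⟪w, v⟫ = 0)
    (hcu : ⟪u, c⟫ ∈ ({-1, 0, 1} : Set ℝ)) (hcv : ⟪v, c⟫ ∈ ({-1, 0, 1} : Set ℝ)) :
    ⟪w, c⟫ ∈ ({-1, 0, 1} : Set ℝ) := by
  simp only [Set.mem_insert_iff, Set.mem_singleton_iff] at hcu hcv ⊢
  rcases hcu with h | h | h
  · -- c = -u
    rw [neg_of_inner_neg_one hu hc h, inner_neg_right, hwu]; norm_num
  · rcases hcv with h' | h' | h'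
    · rw [neg_of_inner_neg_one hv hc h', inner_neg_right, hwv]; norm_num
    · -- c ⊥ u, v and w ⊥ u, v : c = ±w
      have hcu0 : ⟪c, u⟫ = 0 := by rw [real_inner_comm]; exact h
      have hcv0 : ⟪c, v⟫ = 0 := by rw [real_inner_comm]; exact h'
      rcases key3D hu hv hw hc huv hwu hwv hcu0 hcv0 with rfl | rfl
      · right; right; rw [real_inner_self_eq_norm_mul_norm, hw]; norm_num
      · left
        rw [inner_neg_right, real_inner_self_eq_norm_mul_norm, hw]; norm_num
    · rw [eq_of_inner_one hv hc h']; right; left; exact hwv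
  · rw [eq_of_inner_one hu hc h]; right; left; exact hwu

/-- Step lemma: if `u, v` are consecutive frame members and the vertex at `v` is
green (`⟪u, w⟫ ∈ {-1,0,1}`), then `w` is also in the frame. -/
private lemma step_mem {a b u v w : EuclideanSpace ℝ (Fin 3)}
    (ha : ‖a‖ = 1) (hb : ‖b‖ = 1) (hw : ‖w‖ = 1)
    (huv : ⟪u, v⟫ = 0) (hvw : ⟪v, w⟫ = 0)
    (huw : ⟪u, w⟫ ∈ ({-1, 0, 1} : Set ℝ))
    (hu : u ∈ SS a b) (hv : v ∈ SS a b) : w ∈ SS a b := by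
  obtain ⟨hu1, hua, hub⟩ := hu
  obtain ⟨hv1, hva, hvb⟩ := hv
  simp only [Set.mem_insert_iff, Set.mem_singleton_iff] at huw
  rcases huw with h | h | h
  · -- w = -u
    have : w = -u := neg_of_inner_neg_one hu1 hw h
    subst this
    exact ⟨by rw [norm_neg, hu1], by rw [inner_neg_left]; exact memT_neg hua,
      by rw [inner_neg_left]; exact memT_neg hub⟩
  · -- w ⊥ u and w ⊥ v
    have hwu : ⟪w, u⟫ = 0 := by rw [real_inner_comm]; exact h
    have hwv : ⟪w, v⟫ = 0 := by rw [real_inner_comm]; exact hvw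
    exact ⟨hw, inner_memT_of_orth hu1 hv1 hw ha huv hwu hwv hua hva,
      inner_memT_of_orth hu1 hv1 hw hb huv hwu hwv hub hvb⟩
  · have : w = u := eq_of_inner_one hu1 hw h
    subst this; exact ⟨hu1, hua, hub⟩

/-- Chain lemma: along a sequence of consecutive-orthogonal unit vectors with all
interior vertices green, every point stays in the frame of the first two. -/
private lemma chain_mem (q : ℕ → EuclideanSpace ℝ (Fin 3))
    (hq : ∀ m, ‖q m‖ = 1) (ho : ∀ m, ⟪q m, q (m + 1)⟫ = 0)
    (M : ℕ) (hM : 1 ≤ M)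
    (hg : ∀ k, k + 2 ≤ M → ⟪q k, q (k + 2)⟫ ∈ ({-1, 0, 1} : Set ℝ)) :
    q M ∈ SS (q 0) (q 1) := by
  have h01 : ⟪q 0, q 1⟫ ∈ ({-1, 0, 1} : Set ℝ) := by
    right; left; exact ho 0
  have base : ∀ m, m + 1 ≤ M → q m ∈ SS (q 0) (q 1) ∧ q (m + 1) ∈ SS (q 0) (q 1) := by
    intro m
    induction m with
    | zero =>
      intro _
      have h00 : ⟪q 0, q 0⟫ = 1 := by
        rw [real_inner_self_eq_norm_mul_norm, hq 0]; norm_num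
      have h11 : ⟪q 1, q 1⟫ = 1 := by
        rw [real_inner_self_eq_norm_mul_norm, hq 1]; norm_num
      have h10 : ⟪q 1, q 0⟫ = 0 := by rw [real_inner_comm]; exact ho 0
      exact ⟨⟨hq 0, by right; right; exact h00, h01⟩,
        ⟨hq 1, by right; left; exact h10, by right; right; exact h11⟩⟩
    | succ m ih =>
      intro hm
      obtain ⟨hqm, hqm1⟩ := ih (by omega)
      refine ⟨hqm1, ?_⟩
      exact step_mem (hq 0) (hq 1) (hq (m + 2)) (ho m) (ho (m + 1))
        (hg m hm) hqm hqm1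
  obtain ⟨m, rfl⟩ : ∃ m, M = m + 1 := ⟨M - 1, by omega⟩
  exact (base m le_rfl).2

/-- Intersection lemma: a common member of the two frames at a red vertex is `±a`. -/
private lemma inter_frames {a b c x : EuclideanSpace ℝ (Fin 3)}
    (ha : ‖a‖ = 1) (hb : ‖b‖ = 1) (hc : ‖c‖ = 1)
    (hab : ⟪a, b⟫ = 0) (hca : ⟪c, a⟫ = 0)
    (hred : ⟪c, b⟫ ∉ ({-1, 0, 1} : Set ℝ))
    (hx : x ∈ SS a b) (hx' : x ∈ SS a c) : x = a ∨ x = -a := by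
  obtain ⟨hx1, hxa, hxb⟩ := hx
  obtain ⟨-, -, hxc⟩ := hx'
  have hxcT : ⟪x, c⟫ ∈ ({-1, 0, 1} : Set ℝ) := hxc
  simp only [Set.mem_insert_iff, Set.mem_singleton_iff] at hxa hxb hxc
  rcases hxa with h | h | h
  · right
    exact neg_of_inner_neg_one ha hx1 (by rw [real_inner_comm]; exact h)
  · -- x ⊥ a
    exfalso
    rcases hxb with h' | h' | h'
    · -- x = -b
      have hxb' : x = -b := neg_of_inner_neg_one hb hx1 (by rw [real_inner_comm]; exact h')
      apply hred
      have hcb : -⟪x, c⟫ = ⟪c, b⟫ := by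
        rw [hxb', inner_neg_left, neg_neg, real_inner_comm]
      rw [← hcb]
      exact memT_neg hxcT
    · -- x ⊥ a and x ⊥ b
      rcases hxc with h'' | h'' | h''
      · -- c = -x
        apply hred
        rw [neg_of_inner_neg_one hx1 hc h'', inner_neg_left, h', neg_zero]
        right; left; rfl
      · -- c ⊥ a and c ⊥ x; b ⊥ a and b ⊥ x; so c = ±b
        apply hred
        have hba : ⟪b, a⟫ = 0 := by rw [real_inner_comm]; exact hab
        have hbx : ⟪b, x⟫ = 0 := by rw [real_inner_comm]; exact h'
        have hcx : ⟪c, x⟫ = 0 := by rw [real_inner_comm]; exact h''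
        have hax : ⟪a, x⟫ = 0 := by rw [real_inner_comm]; exact h
        rcases key3D ha hx1 hb hc hax hba hbx hca hcx with rfl | hcb
        · right; right
          rw [real_inner_self_eq_norm_mul_norm, hb]; norm_num
        · rw [hcb, inner_neg_left, real_inner_self_eq_norm_mul_norm, hb]
          left; norm_num
      · -- c = x
        apply hred
        rw [eq_of_inner_one hx1 hc h'', h']
        right; left; rfl
    · -- x = b
      apply hred
      rw [← eq_of_inner_one hb hx1 (by rw [real_inner_comm]; exact h'), real_inner_comm]
      exact hxcT
  · left
    exact eq_of_inner_one ha hx1 (by rw [real_inner_comm]; exact h)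

/-- If a closed `π/2`-polygon on the unit sphere in `ℝ³` (a cyclic sequence
`p : ZMod n → ℝ³`, `n ≥ 3`, of pairwise distinct unit vectors with consecutive
points orthogonal) has exactly two red vertices `p i` and `p j`
(vertices with `⟪p (i-1), p (i+1)⟫ ∉ {-1, 0, 1}`), then `p j = -p i`:
the two red vertices are antipodal. -/
theorem polygon_two_red_vertices_antipodal
    (n : ℕ) (hn : 3 ≤ n) (p : ZMod n → EuclideanSpace ℝ (Fin 3))
    (hinj : Function.Injective p)
    (hunit : ∀ i, ‖p i‖ = 1)
    (horth : ∀ i, ⟪p i, p (i + 1)⟫ = 0)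
    (hred2 : {i : ZMod n | ⟪p (i - 1), p (i + 1)⟫ ∉ ({-1, 0, 1} : Set ℝ)}.ncard = 2) :
    ∀ i j : ZMod n,
      ⟪p (i - 1), p (i + 1)⟫ ∉ ({-1, 0, 1} : Set ℝ) →
      ⟪p (j - 1), p (j + 1)⟫ ∉ ({-1, 0, 1} : Set ℝ) →
      i ≠ j → p j = -p i := by
  haveI : NeZero n := ⟨by omega⟩
  intro i j hi hj hij
  -- the red set is exactly {i, j}
  set R : Set (ZMod n) := {i : ZMod n | ⟪p (i - 1), p (i + 1)⟫ ∉ ({-1, 0, 1} : Set ℝ)}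
    with hR
  have hRfin : R.Finite := Set.toFinite R
  have hReq : ({i, j} : Set (ZMod n)) = R := by
    apply Set.eq_of_subset_of_ncard_le
    · intro k hk
      rcases hk with rfl | hk
      · exact hi
      · rw [Set.mem_singleton_iff] at hk; subst hk; exact hj
    · rw [hred2, Set.ncard_pair hij]
    · exact hRfin
  have hgreen : ∀ k : ZMod n, k ≠ i → k ≠ j →
      ⟪p (k - 1), p (k + 1)⟫ ∈ ({-1, 0, 1} : Set ℝ) := by
    intro k hki hkj
    by_contra h
    have : k ∈ R := h
    rw [← hReq] at this
    rcases this with h' | h'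
    · exact hki h'
    · exact hkj h'
  -- forward chain from i to j
  have hfwd : p j ∈ SS (p i) (p (i + 1)) := by
    set M := (j - i).val with hM
    have hM1 : 1 ≤ M := by
      rcases Nat.eq_zero_or_pos M with h0 | h0
      · exfalso
        have : j - i = 0 := by rwa [← ZMod.val_eq_zero, ← hM]
        exact hij (sub_eq_zero.mp this).symm
      · exact h0
    have hMn : M < n := ZMod.val_lt _
    have hMj : i + (M : ZMod n) = j := by
      rw [hM, ZMod.natCast_zmod_val]; ring
    set q : ℕ → EuclideanSpace ℝ (Fin 3) := fun m => p (i + (m : ZMod n)) with hqdef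
    have hqu : ∀ m, ‖q m‖ = 1 := fun m => hunit _
    have hqo : ∀ m, ⟪q m, q (m + 1)⟫ = 0 := by
      intro m
      show ⟪p (i + ((m : ℕ) : ZMod n)), p (i + ((m + 1 : ℕ) : ZMod n))⟫ = 0
      have e : i + ((m + 1 : ℕ) : ZMod n) = (i + ((m : ℕ) : ZMod n)) + 1 := by
        push_cast; ring
      rw [e]; exact horth _
    have hqg : ∀ k, k + 2 ≤ M → ⟪q k, q (k + 2)⟫ ∈ ({-1, 0, 1} : Set ℝ) := by
      intro k hk
      have hne_i : i + ((k + 1 : ℕ) : ZMod n) ≠ i := by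
        intro h
        have h1 : ((k + 1 : ℕ) : ZMod n) = 0 := by linear_combination h
        have h2 := (ZMod.natCast_eq_zero_iff _ _).mp h1
        have : n ≤ k + 1 := Nat.le_of_dvd (by omega) h2
        omega
      have hne_j : i + ((k + 1 : ℕ) : ZMod n) ≠ j := by
        intro h
        have h2 : ((k + 1 : ℕ) : ZMod n) = ((M : ℕ) : ZMod n) := by
          rw [← hMj] at h; linear_combination h
        have h3 := congrArg ZMod.val h2
        rw [ZMod.val_natCast_of_lt (by omega), ZMod.val_natCast_of_lt hMn] at h3
        omega
      have hg := hgreen _ hne_i hne_j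
      have e1 : i + ((k + 1 : ℕ) : ZMod n) - 1 = i + ((k : ℕ) : ZMod n) := by
        push_cast; ring
      have e2 : i + ((k + 1 : ℕ) : ZMod n) + 1 = i + ((k + 2 : ℕ) : ZMod n) := by
        push_cast; ring
      rw [e1, e2] at hg
      exact hg
    have hmem := chain_mem q hqu hqo M hM1 hqg
    have e0 : q 0 = p i := by show p (i + ((0 : ℕ) : ZMod n)) = p i; norm_num
    have e1 : q 1 = p (i + 1) := by show p (i + ((1 : ℕ) : ZMod n)) = p (i + 1); norm_num
    have eM : q M = p j := by show p (i + ((M : ℕ) : ZMod n)) = p j; rw [hMj]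
    rwa [e0, e1, eM] at hmem
  -- backward chain from i to j
  have hbwd : p j ∈ SS (p i) (p (i - 1)) := by
    set M := (i - j).val with hM
    have hM1 : 1 ≤ M := by
      rcases Nat.eq_zero_or_pos M with h0 | h0
      · exfalso
        have : i - j = 0 := by rwa [← ZMod.val_eq_zero, ← hM]
        exact hij (sub_eq_zero.mp this)
      · exact h0
    have hMn : M < n := ZMod.val_lt _
    have hMj : i - (M : ZMod n) = j := by
      rw [hM, ZMod.natCast_zmod_val]; ring
    set q : ℕ → EuclideanSpace ℝ (Fin 3) := fun m => p (i - (m : ZMod n)) with hqdef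
    have hqu : ∀ m, ‖q m‖ = 1 := fun m => hunit _
    have hqo : ∀ m, ⟪q m, q (m + 1)⟫ = 0 := by
      intro m
      show ⟪p (i - ((m : ℕ) : ZMod n)), p (i - ((m + 1 : ℕ) : ZMod n))⟫ = 0
      have e : i - ((m : ℕ) : ZMod n) = (i - ((m + 1 : ℕ) : ZMod n)) + 1 := by
        push_cast; ring
      rw [real_inner_comm, e]
      exact horth _
    have hqg : ∀ k, k + 2 ≤ M → ⟪q k, q (k + 2)⟫ ∈ ({-1, 0, 1} : Set ℝ) := by
      intro k hk
      have hne_i : i - ((k + 1 : ℕ) : ZMod n) ≠ i := by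
        intro h
        have h1 : ((k + 1 : ℕ) : ZMod n) = 0 := by linear_combination -h
        have h2 := (ZMod.natCast_eq_zero_iff _ _).mp h1
        have : n ≤ k + 1 := Nat.le_of_dvd (by omega) h2
        omega
      have hne_j : i - ((k + 1 : ℕ) : ZMod n) ≠ j := by
        intro h
        have h2 : ((k + 1 : ℕ) : ZMod n) = ((M : ℕ) : ZMod n) := by
          rw [← hMj] at h; linear_combination -h
        have h3 := congrArg ZMod.val h2
        rw [ZMod.val_natCast_of_lt (by omega), ZMod.val_natCast_of_lt hMn] at h3
        omega
      have hg := hgreen _ hne_i hne_j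
      have e1 : i - ((k + 1 : ℕ) : ZMod n) - 1 = i - ((k + 2 : ℕ) : ZMod n) := by
        push_cast; ring
      have e2 : i - ((k + 1 : ℕ) : ZMod n) + 1 = i - ((k : ℕ) : ZMod n) := by
        push_cast; ring
      rw [e1, e2, real_inner_comm] at hg
      exact hg
    have hmem := chain_mem q hqu hqo M hM1 hqg
    have e0 : q 0 = p i := by show p (i - ((0 : ℕ) : ZMod n)) = p i; norm_num
    have e1 : q 1 = p (i - 1) := by show p (i - ((1 : ℕ) : ZMod n)) = p (i - 1); norm_num
    have eM : q M = p j := by show p (i - ((M : ℕ) : ZMod n)) = p j; rw [hMj]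
    rwa [e0, e1, eM] at hmem
  -- conclude
  have hca : ⟪p (i - 1), p i⟫ = 0 := by
    have := horth (i - 1)
    rwa [sub_add_cancel] at this
  rcases inter_frames (hunit i) (hunit (i + 1)) (hunit (i - 1))
      (horth i) hca hi hfwd hbwd with h | h
  · exact absurd (hinj h) (Ne.symm hij)
  · exact h
end

section
/- No closed π/2-polygon on the unit sphere in ℝ³ has exactly three red vertices. Equivalently: at a vertex of a polyhedron all of whose faces are rectangles, it is impossible for exactly three incident edges to have dihedral angles that are not multiples of π/2. -/
open scoped RealInnerProductSpace

namespace ThreeRedAux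

noncomputable section

abbrev E3 := EuclideanSpace ℝ (Fin 3)

def Z : Set ℝ := {-1, 0, 1}

lemma zero_mem_Z : (0:ℝ) ∈ Z := by simp [Z]
lemma one_mem_Z : (1:ℝ) ∈ Z := by simp [Z]
lemma neg_mem_Z {a : ℝ} (h : a ∈ Z) : -a ∈ Z := by
  simp only [Z, Set.mem_insert_iff, Set.mem_singleton_iff] at *
  rcases h with h|h|h <;> simp [h]

/-- unit vectors on the coordinate axes of the frame spanned by orthonormal `u, v`. -/
def S (u v : E3) : Set E3 := {x | ‖x‖ = 1 ∧ ⟪x, u⟫ ∈ Z ∧ ⟪x, v⟫ ∈ Z}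

lemma S_comm (u v : E3) : S u v = S v u := by
  ext x; unfold S; constructor <;> rintro ⟨h1, h2, h3⟩ <;> exact ⟨h1, h3, h2⟩

lemma S_neg_right (u v : E3) : S u (-v) = S u v := by
  ext x; unfold S
  constructor <;> rintro ⟨h1, h2, h3⟩ <;> refine ⟨h1, h2, ?_⟩
  · have := neg_mem_Z h3; rwa [inner_neg_right, neg_neg] at this
  · rw [inner_neg_right]; exact neg_mem_Z h3

lemma neg_mem_S {u v x : E3} (h : x ∈ S u v) : -x ∈ S u v := by
  obtain ⟨h1, h2, h3⟩ := h
  exact ⟨by simpa using h1, by rw [inner_neg_left]; exact neg_mem_Z h2,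
    by rw [inner_neg_left]; exact neg_mem_Z h3⟩

lemma inner_sum3 (a b : E3) : ⟪a, b⟫ = a 0 * b 0 + a 1 * b 1 + a 2 * b 2 := by
  simp [PiLp.inner_apply, RCLike.inner_apply, Fin.sum_univ_three]; ring

lemma exists_third (u v : E3) (hu : ‖u‖ = 1) (hv : ‖v‖ = 1) (huv : ⟪u, v⟫ = 0) :
    ∃ w : E3, ‖w‖ = 1 ∧ ⟪u, w⟫ = 0 ∧ ⟪v, w⟫ = 0 := by
  have hu2 : u 0 * u 0 + u 1 * u 1 + u 2 * u 2 = 1 := by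
    have := real_inner_self_eq_norm_mul_norm u
    rw [inner_sum3, hu] at this; linarith
  have hv2 : v 0 * v 0 + v 1 * v 1 + v 2 * v 2 = 1 := by
    have := real_inner_self_eq_norm_mul_norm v
    rw [inner_sum3, hv] at this; linarith
  have huv2 : u 0 * v 0 + u 1 * v 1 + u 2 * v 2 = 0 := by
    rw [inner_sum3] at huv; linarith
  set w : E3 := (WithLp.equiv 2 (Fin 3 → ℝ)).symm
      ![u 1 * v 2 - u 2 * v 1, u 2 * v 0 - u 0 * v 2, u 0 * v 1 - u 1 * v 0] with hwdef
  have hw0 : w 0 = u 1 * v 2 - u 2 * v 1 := rfl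
  have hw1 : w 1 = u 2 * v 0 - u 0 * v 2 := rfl
  have hw2 : w 2 = u 0 * v 1 - u 1 * v 0 := rfl
  have hww : ⟪w, w⟫ = 1 := by
    rw [inner_sum3, hw0, hw1, hw2]; nlinarith [hu2, hv2, huv2]
  refine ⟨w, ?_, ?_, ?_⟩
  · have := real_inner_self_eq_norm_mul_norm w
    rw [hww] at this
    nlinarith [norm_nonneg w]
  · rw [inner_sum3, hw0, hw1, hw2]; ring
  · rw [inner_sum3, hw0, hw1, hw2]; ring


lemma onb_expansion (u v w : E3) (hu : ‖u‖ = 1) (hv : ‖v‖ = 1) (hw : ‖w‖ = 1)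
    (huv : ⟪u, v⟫ = 0) (huw : ⟪u, w⟫ = 0) (hvw : ⟪v, w⟫ = 0) (x y : E3) :
    ⟪x, y⟫ = ⟪x, u⟫ * ⟪y, u⟫ + ⟪x, v⟫ * ⟪y, v⟫ + ⟪x, w⟫ * ⟪y, w⟫ := by
  have sum_mul_eq_inner : ∀ a b : E3, ∑ k, a k * b k = ⟪a, b⟫ := by
    intro a b; rw [inner_sum3, Fin.sum_univ_three]
  have huu : ⟪u, u⟫ = 1 := by rw [real_inner_self_eq_norm_mul_norm, hu]; norm_num
  have hvv : ⟪v, v⟫ = 1 := by rw [real_inner_self_eq_norm_mul_norm, hv]; norm_num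
  have hww' : ⟪w, w⟫ = 1 := by rw [real_inner_self_eq_norm_mul_norm, hw]; norm_num
  have hvu : ⟪v, u⟫ = 0 := by rw [real_inner_comm]; exact huv
  have hwu : ⟪w, u⟫ = 0 := by rw [real_inner_comm]; exact huw
  have hwv : ⟪w, v⟫ = 0 := by rw [real_inner_comm]; exact hvw
  have horm : Orthonormal ℝ ![u, v, w] := by
    rw [orthonormal_iff_ite]
    intro i j
    fin_cases i <;> fin_cases j <;>
      simp [huv, huw, hvw, hu, hv, hw, hvu, hwu, hwv] <;> rw [sum_mul_eq_inner] <;>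
      first
        | exact huu | exact hvv | exact hww' | exact hvu | exact hwu | exact hwv
  have hcard : Fintype.card (Fin 3) = Module.finrank ℝ E3 := by simp
  let b := basisOfLinearIndependentOfCardEqFinrank horm.linearIndependent hcard
  have hb : ⇑b = ![u, v, w] := coe_basisOfLinearIndependentOfCardEqFinrank _ _
  have horm' : Orthonormal ℝ ⇑b := hb ▸ horm
  let B := b.toOrthonormalBasis horm'
  have hB : ∀ i, B i = ![u, v, w] i := by
    intro i
    show b.toOrthonormalBasis horm' i = _
    rw [Module.Basis.coe_toOrthonormalBasis, hb]
  have hsum := B.sum_inner_mul_inner x y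
  rw [Fin.sum_univ_three, hB 0, hB 1, hB 2] at hsum
  simp only [Matrix.cons_val_zero, Matrix.cons_val_one, Matrix.head_cons,
    Matrix.cons_val_two, Matrix.tail_cons] at hsum
  have c1 : ⟪y, u⟫ = ⟪u, y⟫ := by rw [real_inner_comm]
  have c2 : ⟪y, v⟫ = ⟪v, y⟫ := by rw [real_inner_comm]
  have c3 : ⟪y, w⟫ = ⟪w, y⟫ := by rw [real_inner_comm]
  rw [c1, c2, c3]
  linarith

lemma sq_one_mem_Z {a : ℝ} (h : a ^ 2 = 1) : a ∈ Z := by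
  simp only [Z, Set.mem_insert_iff, Set.mem_singleton_iff]
  have h2 : (a - 1) * (a + 1) = 0 := by nlinarith
  rcases mul_eq_zero.mp h2 with h3 | h3
  · right; right; linarith
  · left; linarith

lemma third_mem_Z {a b c : ℝ} (h : a ^ 2 + b ^ 2 + c ^ 2 = 1) (hb : b ∈ Z) (hc : c ∈ Z) :
    a ∈ Z := by
  have hb' := hb; have hc' := hc
  simp only [Z, Set.mem_insert_iff, Set.mem_singleton_iff] at hb' hc'
  rcases hb' with h1|h1|h1 <;> rcases hc' with h2|h2|h2 <;> subst h1 <;> subst h2 <;>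
    first
      | (exfalso; nlinarith)
      | (exact sq_one_mem_Z (by nlinarith))
      | (have h0 : a = 0 := by nlinarith [sq_nonneg a, sq_abs a, abs_nonneg a, sq_nonneg (a - 1), sq_nonneg (a + 1)]
         simp [Z, h0])

lemma dot_mem_Z {a1 a2 a3 b1 b2 b3 : ℝ} (ha : a1 ^ 2 + a2 ^ 2 + a3 ^ 2 = 1)
    (ha1 : a1 ∈ Z) (ha2 : a2 ∈ Z) (ha3 : a3 ∈ Z)
    (hb1 : b1 ∈ Z) (hb2 : b2 ∈ Z) (hb3 : b3 ∈ Z) :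
    a1 * b1 + a2 * b2 + a3 * b3 ∈ Z := by
  simp only [Z, Set.mem_insert_iff, Set.mem_singleton_iff] at ha1 ha2 ha3 hb1 hb2 hb3 ⊢
  rcases ha1 with h|h|h <;> rcases ha2 with h'|h'|h' <;> rcases ha3 with h''|h''|h'' <;>
    subst h <;> subst h' <;> subst h'' <;> norm_num at ha <;>
    rcases hb1 with hb|hb|hb <;> rcases hb2 with hb'|hb'|hb' <;> rcases hb3 with hb''|hb''|hb'' <;>
    subst hb <;> subst hb' <;> subst hb'' <;> norm_num


lemma parseval {u v w : E3} (hu : ‖u‖ = 1) (hv : ‖v‖ = 1) (hw : ‖w‖ = 1)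
    (huv : ⟪u, v⟫ = 0) (huw : ⟪u, w⟫ = 0) (hvw : ⟪v, w⟫ = 0) {z : E3} (hz : ‖z‖ = 1) :
    ⟪z, u⟫ ^ 2 + ⟪z, v⟫ ^ 2 + ⟪z, w⟫ ^ 2 = 1 := by
  have h := onb_expansion u v w hu hv hw huv huw hvw z z
  rw [real_inner_self_eq_norm_mul_norm, hz] at h
  nlinarith [h]

lemma mem_S_self {u v : E3} (hu : ‖u‖ = 1) (huv : ⟪u, v⟫ = 0) : u ∈ S u v := by
  refine ⟨hu, ?_, ?_⟩
  · rw [real_inner_self_eq_norm_mul_norm, hu]; norm_num; exact one_mem_Z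
  · rw [huv]; exact zero_mem_Z

lemma mem_S_right {u v : E3} (hv : ‖v‖ = 1) (huv : ⟪u, v⟫ = 0) : v ∈ S u v := by
  refine ⟨hv, ?_, ?_⟩
  · rw [real_inner_comm, huv]; exact zero_mem_Z
  · rw [real_inner_self_eq_norm_mul_norm, hv]; norm_num; exact one_mem_Z

/-- Any two members of the axis-set of an orthonormal pair have inner product in `Z`. -/
lemma inner_mem_Z {u v : E3} (hu : ‖u‖ = 1) (hv : ‖v‖ = 1) (huv : ⟪u, v⟫ = 0)
    {x y : E3} (hx : x ∈ S u v) (hy : y ∈ S u v) : ⟪x, y⟫ ∈ Z := by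
  obtain ⟨w, hw, huw, hvw⟩ := exists_third u v hu hv huv
  obtain ⟨hx1, hx2, hx3⟩ := hx
  obtain ⟨hy1, hy2, hy3⟩ := hy
  have hpx := parseval hu hv hw huv huw hvw hx1
  have hpy := parseval hu hv hw huv huw hvw hy1
  have hxw : ⟪x, w⟫ ∈ Z := third_mem_Z (by linarith) hx2 hx3
  have hyw : ⟪y, w⟫ ∈ Z := third_mem_Z (by linarith) hy2 hy3
  rw [onb_expansion u v w hu hv hw huv huw hvw x y]
  exact dot_mem_Z hpx hx2 hx3 hxw hy2 hy3 hyw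

/-- Two orthogonal members of an axis-set generate the same axis-set. -/
lemma S_eq_of_pair {u v x y : E3} (hu : ‖u‖ = 1) (hv : ‖v‖ = 1) (huv : ⟪u, v⟫ = 0)
    (hx : x ∈ S u v) (hy : y ∈ S u v) (hxy : ⟪x, y⟫ = 0) : S u v = S x y := by
  have hx1 : ‖x‖ = 1 := hx.1
  have hy1 : ‖y‖ = 1 := hy.1
  have huS : u ∈ S x y := by
    refine ⟨hu, ?_, ?_⟩
    · rw [real_inner_comm]; exact inner_mem_Z hu hv huv hx (mem_S_self hu huv)
    · rw [real_inner_comm]; exact inner_mem_Z hu hv huv hy (mem_S_self hu huv)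
  have hvS : v ∈ S x y := by
    refine ⟨hv, ?_, ?_⟩
    · rw [real_inner_comm]; exact inner_mem_Z hu hv huv hx (mem_S_right hv huv)
    · rw [real_inner_comm]; exact inner_mem_Z hu hv huv hy (mem_S_right hv huv)
  ext z
  constructor
  · intro hz
    exact ⟨hz.1, inner_mem_Z hu hv huv hz hx, inner_mem_Z hu hv huv hz hy⟩
  · intro hz
    exact ⟨hz.1, inner_mem_Z hx1 hy1 hxy hz huS, inner_mem_Z hx1 hy1 hxy hz hvS⟩

lemma eq_of_inner_one {x y : E3} (hx : ‖x‖ = 1) (hy : ‖y‖ = 1) (h : ⟪x, y⟫ = 1) : y = x :=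
  ((inner_eq_one_iff_of_norm_eq_one hx hy).mp h).symm

lemma eq_neg_of_inner_neg_one {x y : E3} (hx : ‖x‖ = 1) (hy : ‖y‖ = 1) (h : ⟪x, y⟫ = -1) :
    y = -x := by
  have h' : ⟪x, -y⟫ = 1 := by rw [inner_neg_right, h]; norm_num
  have := (inner_eq_one_iff_of_norm_eq_one hx (by simpa using hy)).mp h'
  rw [this]; simp

/-- Green step: the axis-set of consecutive edges agrees at a green vertex. -/
lemma S_green {u v x : E3} (hu : ‖u‖ = 1) (hv : ‖v‖ = 1) (hx : ‖x‖ = 1)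
    (huv : ⟪u, v⟫ = 0) (hvx : ⟪v, x⟫ = 0) (hg : ⟪u, x⟫ ∈ Z) : S v x = S u v := by
  simp only [Z, Set.mem_insert_iff, Set.mem_singleton_iff] at hg
  rcases hg with hg | hg | hg
  · rw [eq_neg_of_inner_neg_one hu hx hg, S_neg_right, S_comm]
  · ext z
    constructor
    · rintro ⟨hz1, hz2, hz3⟩
      refine ⟨hz1, ?_, hz2⟩
      have hp := parseval hv hx hu hvx (by rw [real_inner_comm]; exact huv)
        (by rw [real_inner_comm]; exact hg) hz1
      exact third_mem_Z (by linarith) hz2 hz3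
    · rintro ⟨hz1, hz2, hz3⟩
      refine ⟨hz1, hz3, ?_⟩
      have hp := parseval hu hv hx huv hg hvx hz1
      exact third_mem_Z (by linarith) hz3 hz2
  · rw [eq_of_inner_one hu hx hg, S_comm]

/-- Red step: the axis-set changes at a red vertex. -/
lemma S_red {u v x : E3} (hx : ‖x‖ = 1) (hvx : ⟪v, x⟫ = 0) (hr : ⟪u, x⟫ ∉ Z) :
    S u v ≠ S v x := by
  intro h
  have hmem : x ∈ S v x := mem_S_right hx hvx
  rw [← h] at hmem
  exact hr (by rw [real_inner_comm]; exact hmem.2.1)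


/-- The final geometric contradiction: three pairwise-distinct axis-sets cyclically
sharing the three distinct unit vectors `q1, q2, q3` cannot exist. -/
lemma finale {u1 v1 u2 v2 u3 v3 q1 q2 q3 : E3}
    (hu1 : ‖u1‖ = 1) (hv1 : ‖v1‖ = 1) (h1o : ⟪u1, v1⟫ = 0)
    (hu2 : ‖u2‖ = 1) (hv2 : ‖v2‖ = 1) (h2o : ⟪u2, v2⟫ = 0)
    (hu3 : ‖u3‖ = 1) (hv3 : ‖v3‖ = 1) (h3o : ⟪u3, v3⟫ = 0)
    (hq1c : q1 ∈ S u3 v3) (hq1a : q1 ∈ S u1 v1)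
    (hq2a : q2 ∈ S u1 v1) (hq2b : q2 ∈ S u2 v2)
    (hq3b : q3 ∈ S u2 v2) (hq3c : q3 ∈ S u3 v3)
    (h12 : S u1 v1 ≠ S u2 v2) (h23 : S u2 v2 ≠ S u3 v3) (h31 : S u3 v3 ≠ S u1 v1)
    (hd12 : q1 ≠ q2) (hd23 : q2 ≠ q3) (hd13 : q1 ≠ q3) : False := by
  have hq1u : ‖q1‖ = 1 := hq1a.1
  have hq2u : ‖q2‖ = 1 := hq2a.1
  have hq3u : ‖q3‖ = 1 := hq3b.1
  have ha : ⟪q1, q2⟫ ∈ Z := inner_mem_Z hu1 hv1 h1o hq1a hq2a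
  simp only [Z, Set.mem_insert_iff, Set.mem_singleton_iff] at ha
  rcases ha with ha | ha | ha
  · -- q2 = -q1
    have hq21 : q2 = -q1 := eq_neg_of_inner_neg_one hq1u hq2u ha
    have hq1b : q1 ∈ S u2 v2 := by
      have := neg_mem_S hq2b; rwa [hq21, neg_neg] at this
    have hc : ⟪q3, q1⟫ ∈ Z := inner_mem_Z hu3 hv3 h3o hq3c hq1c
    simp only [Z, Set.mem_insert_iff, Set.mem_singleton_iff] at hc
    rcases hc with hc | hc | hc
    · exact hd23 (by rw [hq21, eq_neg_of_inner_neg_one hq3u hq1u hc, neg_neg])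
    · have e2 : S u2 v2 = S q3 q1 := S_eq_of_pair hu2 hv2 h2o hq3b hq1b hc
      have e3 : S u3 v3 = S q3 q1 := S_eq_of_pair hu3 hv3 h3o hq3c hq1c hc
      exact h23 (e2.trans e3.symm)
    · exact hd13 (eq_of_inner_one hq3u hq1u hc)
  · -- ⟪q1,q2⟫ = 0
    have hb : ⟪q2, q3⟫ ∈ Z := inner_mem_Z hu2 hv2 h2o hq2b hq3b
    simp only [Z, Set.mem_insert_iff, Set.mem_singleton_iff] at hb
    rcases hb with hb | hb | hb
    · -- q3 = -q2
      have hq32 : q3 = -q2 := eq_neg_of_inner_neg_one hq2u hq3u hb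
      have hq3a : q3 ∈ S u1 v1 := by rw [hq32]; exact neg_mem_S hq2a
      have hc0 : ⟪q3, q1⟫ = 0 := by
        rw [hq32, inner_neg_left, real_inner_comm, ha, neg_zero]
      have e1 : S u1 v1 = S q3 q1 := S_eq_of_pair hu1 hv1 h1o hq3a hq1a hc0
      have e3 : S u3 v3 = S q3 q1 := S_eq_of_pair hu3 hv3 h3o hq3c hq1c hc0
      exact h31 (e3.trans e1.symm)
    · -- all orthogonal
      have e1 : S u1 v1 = S q1 q2 := S_eq_of_pair hu1 hv1 h1o hq1a hq2a ha
      have e2 : S u2 v2 = S q2 q3 := S_eq_of_pair hu2 hv2 h2o hq2b hq3b hb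
      have hq2m : q2 ∈ S q1 q2 := mem_S_right hq2u ha
      have hq3m : q3 ∈ S q1 q2 := by
        refine ⟨hq3u, ?_, ?_⟩
        · rw [real_inner_comm]
          exact inner_mem_Z hu3 hv3 h3o hq1c hq3c
        · rw [real_inner_comm, hb]; exact zero_mem_Z
      have e12 : S q1 q2 = S q2 q3 := S_eq_of_pair hq1u hq2u ha hq2m hq3m hb
      exact h12 (e1.trans (e12.trans e2.symm))
    · exact hd23 (eq_of_inner_one hq2u hq3u hb).symm -- q3 = q2? eq_of_inner_one gives q3 = q2
  · exact hd12 (eq_of_inner_one hq1u hq2u ha).symm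

end

end ThreeRedAux

open ThreeRedAux

/-- No closed `π/2`-polygon on the unit sphere in `ℝ³` (a cyclic sequence
`p : ZMod n → ℝ³`, `n ≥ 3`, of pairwise distinct unit vectors with consecutive
points orthogonal) has exactly three red vertices, i.e. exactly three vertices `i`
with `⟪p (i-1), p (i+1)⟫ ∉ {-1, 0, 1}`. -/
theorem no_polygon_with_exactly_three_red_vertices
    (n : ℕ) (hn : 3 ≤ n) (p : ZMod n → EuclideanSpace ℝ (Fin 3))
    (hinj : Function.Injective p)
    (hunit : ∀ i, ‖p i‖ = 1)
    (horth : ∀ i, ⟪p i, p (i + 1)⟫ = 0) :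
    {i : ZMod n | ⟪p (i - 1), p (i + 1)⟫ ∉ ({-1, 0, 1} : Set ℝ)}.ncard ≠ 3 := by
  intro h3
  haveI : NeZero n := ⟨by omega⟩
  set R : Set (ZMod n) := {i : ZMod n | ⟪p (i - 1), p (i + 1)⟫ ∉ ({-1, 0, 1} : Set ℝ)}
    with hRdef
  have hRmemZ : ∀ i : ZMod n, i ∉ R → ⟪p (i - 1), p (i + 1)⟫ ∈ Z := by
    intro i hi
    simp only [hRdef, Set.mem_setOf_eq, not_not] at hi
    exact hi
  have hRmemZ' : ∀ i : ZMod n, i ∈ R → ⟪p (i - 1), p (i + 1)⟫ ∉ Z := by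
    intro i hi
    simp only [hRdef, Set.mem_setOf_eq] at hi
    exact hi
  have hgreen : ∀ i : ZMod n, i + 1 ∉ R →
      S (p (i + 1)) (p (i + 1 + 1)) = S (p i) (p (i + 1)) := by
    intro i hi
    have hg := hRmemZ _ hi
    rw [add_sub_cancel_right] at hg
    exact S_green (hunit i) (hunit (i + 1)) (hunit (i + 1 + 1)) (horth i) (horth (i + 1)) hg
  have harc : ∀ (i : ZMod n) (k : ℕ), (∀ j : ℕ, 1 ≤ j → j ≤ k → i + (j : ZMod n) ∉ R) →
      S (p (i + (k : ZMod n))) (p (i + (k : ZMod n) + 1)) = S (p i) (p (i + 1)) := by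
    intro i k
    induction k with
    | zero => intro _; norm_num
    | succ m ih =>
      intro hj
      have h1 := ih (fun j hj1 hj2 => hj j hj1 (by omega))
      have hc : (((m + 1 : ℕ)) : ZMod n) = (m : ZMod n) + 1 := by push_cast; ring
      have h2 : (i + (m : ZMod n)) + 1 ∉ R := by
        have := hj (m + 1) (by omega) le_rfl
        rwa [hc, ← add_assoc] at this
      have h3' := hgreen (i + (m : ZMod n)) h2
      rw [hc, ← add_assoc, h3']
      exact h1
  have hfin : R.Finite := Set.toFinite R
  obtain ⟨a0, b0, c0, hab0, hac0, hbc0, hRabc⟩ := Set.ncard_eq_three.mp h3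
  have hother : ∀ r s : ZMod n, ∃ t, t ∈ R ∧ t ≠ r ∧ t ≠ s := by
    intro r s
    by_cases ha : a0 ≠ r ∧ a0 ≠ s
    · exact ⟨a0, by rw [hRabc]; simp, ha.1, ha.2⟩
    by_cases hb : b0 ≠ r ∧ b0 ≠ s
    · exact ⟨b0, by rw [hRabc]; simp, hb.1, hb.2⟩
    by_cases hc : c0 ≠ r ∧ c0 ≠ s
    · exact ⟨c0, by rw [hRabc]; simp, hc.1, hc.2⟩
    exfalso
    push_neg at ha hb hc
    rcases eq_or_ne a0 r with h1 | h1
    · rcases eq_or_ne b0 r with h2 | h2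
      · exact hab0 (h1.trans h2.symm)
      · rcases eq_or_ne c0 r with h3' | h3'
        · exact hac0 (h1.trans h3'.symm)
        · exact hbc0 ((hb h2).trans (hc h3').symm)
    · rcases eq_or_ne b0 r with h2 | h2
      · rcases eq_or_ne c0 r with h3' | h3'
        · exact hbc0 (h2.trans h3'.symm)
        · exact hac0 ((ha h1).trans (hc h3').symm)
      · exact hab0 ((ha h1).trans (hb h2).symm)
  have hnext : ∀ r, r ∈ R → ∃ k : ℕ, 1 ≤ k ∧ k < n ∧ r + (k : ZMod n) ∈ R ∧
      ∀ j : ℕ, 1 ≤ j → j < k → r + (j : ZMod n) ∉ R := by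
    intro r hr
    have hex : ∃ k : ℕ, k ≠ 0 ∧ r + (k : ZMod n) ∈ R := by
      refine ⟨n, by omega, ?_⟩
      rw [ZMod.natCast_self, add_zero]; exact hr
    classical
    obtain ⟨hk0, hkR⟩ := Nat.find_spec hex
    refine ⟨Nat.find hex, by omega, ?_, hkR, ?_⟩
    · by_contra hkn
      push_neg at hkn
      obtain ⟨s, hsR, hsr, _⟩ := hother r r
      have hval : (((s - r).val : ℕ) : ZMod n) = s - r := ZMod.natCast_rightInverse _
      have hv0 : (s - r).val ≠ 0 := by
        intro h0
        apply hsr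
        have hz : s - r = 0 := by rwa [ZMod.val_eq_zero] at h0
        exact sub_eq_zero.mp hz
      have hvlt : (s - r).val < n := ZMod.val_lt _
      refine Nat.find_min hex (m := (s - r).val) (by omega) ⟨hv0, ?_⟩
      have he : r + (((s - r).val : ℕ) : ZMod n) = s := by rw [hval]; ring
      rw [he]; exact hsR
    · intro j hj1 hj2
      exact fun hin => Nat.find_min hex hj2 ⟨by omega, hin⟩
  have ha0R : a0 ∈ R := by rw [hRabc]; simp
  obtain ⟨k1, hk1a, hk1n, hR2, hmin1⟩ := hnext a0 ha0R
  set r1 := a0 with hr1def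
  set r2 := r1 + (k1 : ZMod n) with hr2def
  obtain ⟨k2, hk2a, hk2n, hR3, hmin2⟩ := hnext r2 hR2
  set r3 := r2 + (k2 : ZMod n) with hr3def
  obtain ⟨k3, hk3a, hk3n, hR4, hmin3⟩ := hnext r3 hR3
  have hne21 : r2 ≠ r1 := by
    intro h
    have h0 : (k1 : ZMod n) = 0 := by
      have := h
      rw [hr2def] at this
      rwa [add_eq_left] at this
    rw [ZMod.natCast_eq_zero_iff] at h0
    have := Nat.le_of_dvd (by omega) h0; omega
  have hne32 : r3 ≠ r2 := by
    intro h
    have h0 : (k2 : ZMod n) = 0 := by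
      have := h
      rw [hr3def] at this
      rwa [add_eq_left] at this
    rw [ZMod.natCast_eq_zero_iff] at h0
    have := Nat.le_of_dvd (by omega) h0; omega
  have h12n : k1 + k2 < n := by
    rcases Nat.lt_trichotomy (k1 + k2) n with h | h | h
    · exact h
    · exfalso
      have hr31 : r3 = r1 := by
        rw [hr3def, hr2def, add_assoc, ← Nat.cast_add, h, ZMod.natCast_self, add_zero]
      obtain ⟨s, hsR, hs1, hs2⟩ := hother r1 r2
      set j := (s - r1).val with hjdef
      have hval : ((j : ℕ) : ZMod n) = s - r1 := ZMod.natCast_rightInverse _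
      have hs_eq : r1 + (j : ZMod n) = s := by rw [hval]; ring
      have hj0 : j ≠ 0 := by
        intro h0
        apply hs1
        have hz : s - r1 = 0 := by rw [← hval, h0]; simp
        exact sub_eq_zero.mp hz
      have hjn : j < n := ZMod.val_lt _
      rcases Nat.lt_trichotomy j k1 with hj | hj | hj
      · exact hmin1 j (by omega) hj (by rw [hs_eq]; exact hsR)
      · apply hs2
        rw [← hs_eq, hj, hr2def]
      · have hcast : ((j - k1 : ℕ) : ZMod n) = (j : ZMod n) - (k1 : ZMod n) :=
          Nat.cast_sub (by omega)
        have he : r2 + ((j - k1 : ℕ) : ZMod n) = s := by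
          rw [hcast, hr2def, ← hs_eq]; ring
        exact hmin2 (j - k1) (by omega) (by omega) (by rw [he]; exact hsR)
    · exfalso
      have hm : r1 + ((k1 + k2 - n : ℕ) : ZMod n) = r3 := by
        have hc : ((k1 + k2 - n : ℕ) : ZMod n) = (k1 : ZMod n) + (k2 : ZMod n) := by
          rw [Nat.cast_sub (by omega), Nat.cast_add, ZMod.natCast_self, sub_zero]
        rw [hc, hr3def, hr2def]; ring
      exact hmin1 (k1 + k2 - n) (by omega) (by omega) (by rw [hm]; exact hR3)
  have hne31 : r3 ≠ r1 := by
    intro h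
    have h0 : ((k1 + k2 : ℕ) : ZMod n) = 0 := by
      have hh := h
      rw [hr3def, hr2def, add_assoc, ← Nat.cast_add] at hh
      rwa [add_eq_left] at hh
    rw [ZMod.natCast_eq_zero_iff] at h0
    have := Nat.le_of_dvd (by omega) h0; omega
  have hsub : ({r1, r2, r3} : Set (ZMod n)) ⊆ R := by
    intro x hx
    simp only [Set.mem_insert_iff, Set.mem_singleton_iff] at hx
    rcases hx with h | h | h
    · rw [h]; exact ha0R
    · rw [h]; exact hR2
    · rw [h]; exact hR3
  have hcard3 : ({r1, r2, r3} : Set (ZMod n)).ncard = 3 :=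
    Set.ncard_eq_three.mpr ⟨r1, r2, r3, hne21.symm, hne31.symm, hne32.symm, rfl⟩
  have hReq : R = {r1, r2, r3} :=
    (Set.eq_of_subset_of_ncard_le hsub (by rw [h3, hcard3]) hfin).symm
  have hje : r3 + ((n - (k1 + k2) : ℕ) : ZMod n) = r1 := by
    have hc : ((n - (k1 + k2) : ℕ) : ZMod n) = -((k1 : ZMod n) + (k2 : ZMod n)) := by
      rw [Nat.cast_sub (by omega), Nat.cast_add, ZMod.natCast_self]; ring
    rw [hc, hr3def, hr2def]; ring
  have hk3le : k3 ≤ n - (k1 + k2) := by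
    by_contra hlt
    push_neg at hlt
    exact hmin3 (n - (k1 + k2)) (by omega) (by omega) (by rw [hje]; exact ha0R)
  have hr41 : r3 + (k3 : ZMod n) = r1 := by
    have h4 := hR4
    rw [hReq] at h4
    simp only [Set.mem_insert_iff, Set.mem_singleton_iff] at h4
    rcases h4 with h | h | h
    · exact h
    · exfalso
      have h0 : ((k2 + k3 : ℕ) : ZMod n) = 0 := by
        have hh := h
        rw [hr3def, add_assoc, ← Nat.cast_add] at hh
        rwa [add_eq_left] at hh
      rw [ZMod.natCast_eq_zero_iff] at h0
      have := Nat.le_of_dvd (by omega) h0; omega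
    · exfalso
      have h0 : ((k3 : ℕ) : ZMod n) = 0 := by rwa [add_eq_left] at h
      rw [ZMod.natCast_eq_zero_iff] at h0
      have := Nat.le_of_dvd (by omega) h0; omega
  have key : ∀ (r : ZMod n) (k : ℕ), 1 ≤ k → (r + (k : ZMod n)) ∈ R →
      (∀ j : ℕ, 1 ≤ j → j < k → r + (j : ZMod n) ∉ R) →
      (S (p (r + (k : ZMod n))) (p (r + (k : ZMod n) + 1)) ≠ S (p r) (p (r + 1)) ∧
       p (r + (k : ZMod n)) ∈ S (p r) (p (r + 1)) ∧
       p (r + (k : ZMod n)) ∈ S (p (r + (k : ZMod n))) (p (r + (k : ZMod n) + 1))) := by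
    intro r k hk1 hrR hmin
    set r' := r + (k : ZMod n) with hr'def
    have harc' := harc r (k - 1) (fun j hj1 hj2 => hmin j hj1 (by omega))
    have hpred : r + ((k - 1 : ℕ) : ZMod n) = r' - 1 := by
      rw [Nat.cast_sub hk1, hr'def]; push_cast; ring
    rw [hpred] at harc'
    have hs : r' - 1 + 1 = r' := by ring
    rw [hs] at harc'
    have ho : ⟪p (r' - 1), p r'⟫ = 0 := by
      have hh := horth (r' - 1); rwa [hs] at hh
    have hmem1 : p r' ∈ S (p (r' - 1)) (p r') := mem_S_right (hunit r') ho
    have hmemT1 : p r' ∈ S (p r) (p (r + 1)) := by rw [← harc']; exact hmem1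
    have hmem2 : p r' ∈ S (p r') (p (r' + 1)) := mem_S_self (hunit r') (horth r')
    have hrr := hRmemZ' r' hrR
    have hred : S (p (r' - 1)) (p r') ≠ S (p r') (p (r' + 1)) :=
      S_red (hunit (r' + 1)) (horth r') hrr
    refine ⟨?_, hmemT1, hmem2⟩
    rw [← harc']
    exact hred.symm
  obtain ⟨hT21ne, hq2inT1, hq2inT2⟩ := key r1 k1 hk1a hR2 hmin1
  obtain ⟨hT32ne, hq3inT2, hq3inT3⟩ := key r2 k2 hk2a hR3 hmin2
  obtain ⟨hT13ne, hq1inT3, hq1inT1⟩ := key r3 k3 hk3a hR4 hmin3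
  rw [← hr2def] at hT21ne hq2inT1 hq2inT2
  rw [← hr3def] at hT32ne hq3inT2 hq3inT3
  rw [hr41] at hT13ne hq1inT3 hq1inT1
  exact finale (hunit r1) (hunit (r1 + 1)) (horth r1)
    (hunit r2) (hunit (r2 + 1)) (horth r2)
    (hunit r3) (hunit (r3 + 1)) (horth r3)
    hq1inT3 hq1inT1 hq2inT1 hq2inT2 hq3inT2 hq3inT3
    hT21ne.symm hT32ne.symm hT13ne.symm
    (fun h => hne21 (hinj h).symm)
    (fun h => hne32 (hinj h).symm)
    (fun h => hne31 (hinj h).symm)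
end

section
/- If a closed π/2-polygon on the unit sphere in ℝ³ has exactly four red vertices, then there exist unit vectors u and w with ⟪u, w⟫ = 0 such that the set of red vertices is exactly {u, −u, w, −w}. Equivalently: if exactly four edges with nonrectilinear dihedral angle are incident to a vertex of a polyhedron all of whose faces are rectangles, then they fall into two collinear pairs meeting orthogonally, forming a '+' in 3-space. -/
open scoped RealInnerProductSpace

namespace PolygonPlusAux

abbrev E3 := EuclideanSpace ℝ (Fin 3)

def cross (x y : E3) : E3 := WithLp.toLp 2 ![x 1 * y 2 - x 2 * y 1, x 2 * y 0 - x 0 * y 2, x 0 * y 1 - x 1 * y 0]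

lemma inner3 (x y : E3) : ⟪x,y⟫ = x 0 * y 0 + x 1 * y 1 + x 2 * y 2 := by
  simp [PiLp.inner_apply, RCLike.inner_apply, Fin.sum_univ_three]; ring

lemma cross0 (x y : E3) : cross x y 0 = x 1 * y 2 - x 2 * y 1 := rfl
lemma cross1 (x y : E3) : cross x y 1 = x 2 * y 0 - x 0 * y 2 := rfl
lemma cross2 (x y : E3) : cross x y 2 = x 0 * y 1 - x 1 * y 0 := rfl

lemma unit_inner {x : E3} (h : ‖x‖ = 1) : ⟪x,x⟫ = 1 := by
  rw [real_inner_self_eq_norm_mul_norm, h]; ring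

lemma triple (a b c : E3) : ⟪a, cross b c⟫ = ⟪cross a b, c⟫ := by
  simp only [inner3, cross0, cross1, cross2]; ring

lemma binet (a b c d : E3) : ⟪cross a b, cross c d⟫ = ⟪a,c⟫*⟪b,d⟫ - ⟪a,d⟫*⟪b,c⟫ := by
  simp only [inner3, cross0, cross1, cross2]; ring

lemma detmul (x y a b : E3) : ⟪x, cross a b⟫ * ⟪y, cross a b⟫ =
    ⟪x,y⟫*(⟪a,a⟫*⟪b,b⟫ - ⟪a,b⟫^2) - ⟪x,a⟫*(⟪y,a⟫*⟪b,b⟫ - ⟪a,b⟫*⟪y,b⟫)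
      + ⟪x,b⟫*(⟪y,a⟫*⟪a,b⟫ - ⟪a,a⟫*⟪y,b⟫) := by
  simp only [inner3, cross0, cross1, cross2]; ring

lemma parseval2 {a b : E3} (ha : ‖a‖ = 1) (hb : ‖b‖ = 1) (hab : ⟪a,b⟫ = 0) (x y : E3) :
    ⟪x,y⟫ = ⟪x,a⟫*⟪y,a⟫ + ⟪x,b⟫*⟪y,b⟫ + ⟪x,cross a b⟫*⟪y,cross a b⟫ := by
  have h := detmul x y a b
  rw [unit_inner ha, unit_inner hb, hab] at h
  linarith [h]

lemma parseval1 {a b : E3} (ha : ‖a‖ = 1) (hb : ‖b‖ = 1) (hab : ⟪a,b⟫ = 0) {x : E3}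
    (hx : ‖x‖ = 1) : ⟪x,a⟫^2 + ⟪x,b⟫^2 + ⟪x,cross a b⟫^2 = 1 := by
  have h := parseval2 ha hb hab x x
  rw [unit_inner hx] at h
  nlinarith [h]

lemma cross_unit {a b : E3} (ha : ‖a‖ = 1) (hb : ‖b‖ = 1) (hab : ⟪a,b⟫ = 0) :
    ‖cross a b‖ = 1 := by
  have h : ⟪cross a b, cross a b⟫ = 1 := by
    rw [binet, unit_inner ha, unit_inner hb, hab]; ring
  rw [real_inner_self_eq_norm_mul_norm] at h
  nlinarith [norm_nonneg (cross a b)]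

lemma cross_ortho_left (a b : E3) : ⟪a, cross a b⟫ = 0 := by
  simp only [inner3, cross0, cross1, cross2]; ring
lemma cross_ortho_right (a b : E3) : ⟪b, cross a b⟫ = 0 := by
  simp only [inner3, cross0, cross1, cross2]; ring

lemma inner_eq_one_eq {x y : E3} (hx : ‖x‖ = 1) (hy : ‖y‖ = 1) (h : ⟪x,y⟫ = 1) : x = y :=
  (inner_eq_one_iff_of_norm_eq_one hx hy).mp h

lemma inner_eq_neg_one_eq {x y : E3} (hx : ‖x‖ = 1) (hy : ‖y‖ = 1) (h : ⟪x,y⟫ = -1) : x = -y := by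
  have h3 : ⟪x, -y⟫ = (1:ℝ) := by rw [inner_neg_right]; linarith
  exact (inner_eq_one_iff_of_norm_eq_one hx (by rw [norm_neg]; exact hy)).mp h3

lemma eq_or_neg_of_sq_one {x y : E3} (hx : ‖x‖ = 1) (hy : ‖y‖ = 1) (h : ⟪x,y⟫^2 = 1) :
    x = y ∨ x = -y := by
  have h2 : (⟪x,y⟫ - 1) * (⟪x,y⟫ + 1) = 0 := by nlinarith
  rcases mul_eq_zero.mp h2 with h1 | h1
  · left
    have h3 : ⟪x,y⟫ = (1:ℝ) := by linarith
    exact inner_eq_one_eq hx hy h3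
  · right
    have h3 : ⟪x,y⟫ = (-1:ℝ) := by linarith
    exact inner_eq_neg_one_eq hx hy h3

lemma cross_anti (a b : E3) : cross b a = -(cross a b) := by
  ext k
  fin_cases k <;> (show _ = _; simp [cross]; ring)

lemma cross_neg_right (a b : E3) : cross a (-b) = -(cross a b) := by
  ext k; fin_cases k <;> (show _ = _; simp [cross]; ring)

lemma cross_bac {a b : E3} (hb : ‖b‖ = 1) (hab : ⟪a,b⟫ = 0) :
    cross b (cross a b) = a := by
  have hb' : b 0 * b 0 + b 1 * b 1 + b 2 * b 2 = 1 := by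
    have h0 : ⟪b,b⟫ = 1 := by rw [real_inner_self_eq_norm_mul_norm, hb]; ring
    rw [inner3] at h0; linarith
  have hab' : a 0 * b 0 + a 1 * b 1 + a 2 * b 2 = 0 := by rw [← inner3]; exact hab
  ext k
  fin_cases k
  · show cross b (cross a b) 0 = a 0
    simp only [cross0, cross1, cross2]; linear_combination a 0 * hb' - b 0 * hab'
  · show cross b (cross a b) 1 = a 1
    simp only [cross0, cross1, cross2]; linear_combination a 1 * hb' - b 1 * hab'
  · show cross b (cross a b) 2 = a 2
    simp only [cross0, cross1, cross2]; linear_combination a 2 * hb' - b 2 * hab'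

def frame (a b : E3) : Set E3 := {a, -a, b, -b, cross a b, -(cross a b)}

lemma mem_frame_left (a b : E3) : a ∈ frame a b := by simp [frame]
lemma mem_frame_right (a b : E3) : b ∈ frame a b := by simp [frame]

lemma step1 {a b y : E3} (ha : ‖a‖ = 1) (hb : ‖b‖ = 1) (hy : ‖y‖ = 1)
    (hab : ⟪a,b⟫ = 0) (hby : ⟪b,y⟫ = 0) (hgreen : ⟪a,y⟫ ∈ ({-1,0,1} : Set ℝ)) :
    y = a ∨ y = -a ∨ y = cross a b ∨ y = -(cross a b) := by
  have hp := parseval1 ha hb hab hy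
  have hyb : ⟪y,b⟫ = 0 := by rw [real_inner_comm]; exact hby
  have hya : ⟪y,a⟫ = ⟪a,y⟫ := real_inner_comm a y
  simp only [Set.mem_insert_iff, Set.mem_singleton_iff] at hgreen
  rcases hgreen with h | h | h
  · right; left
    exact inner_eq_neg_one_eq hy ha (by rw [hya, h])
  · have h2 : ⟪y, cross a b⟫^2 = 1 := by rw [hya, h] at hp; nlinarith
    rcases eq_or_neg_of_sq_one hy (cross_unit ha hb hab) h2 with h3 | h3
    · right; right; left; exact h3
    · right; right; right; exact h3
  · left; exact inner_eq_one_eq hy ha (by rw [hya, h])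

lemma frame_green {a b y : E3} (ha : ‖a‖ = 1) (hb : ‖b‖ = 1) (hy : ‖y‖ = 1)
    (hab : ⟪a,b⟫ = 0) (hby : ⟪b,y⟫ = 0) (hgreen : ⟪a,y⟫ ∈ ({-1,0,1} : Set ℝ)) :
    frame b y = frame a b := by
  have hcba : cross b a = -(cross a b) := cross_anti a b
  rcases step1 ha hb hy hab hby hgreen with rfl | rfl | rfl | rfl
  · unfold frame
    rw [hcba]
    ext x; simp only [Set.mem_insert_iff, Set.mem_singleton_iff, neg_neg]; tauto
  · unfold frame
    rw [cross_neg_right, hcba]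
    ext x; simp only [Set.mem_insert_iff, Set.mem_singleton_iff, neg_neg]; tauto
  · unfold frame
    rw [cross_bac hb hab]
    ext x; simp only [Set.mem_insert_iff, Set.mem_singleton_iff, neg_neg]; tauto
  · unfold frame
    rw [cross_neg_right, cross_bac hb hab]
    ext x; simp only [Set.mem_insert_iff, Set.mem_singleton_iff, neg_neg]; tauto

lemma frame_inner {a b : E3} (ha : ‖a‖ = 1) (hb : ‖b‖ = 1) (hab : ⟪a,b⟫ = 0)
    {x y : E3} (hx : x ∈ frame a b) (hy : y ∈ frame a b) : ⟪x,y⟫ ∈ ({-1,0,1} : Set ℝ) := by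
  have haa := unit_inner ha
  have hbb := unit_inner hb
  have hcc : ⟪cross a b, cross a b⟫ = 1 := unit_inner (cross_unit ha hb hab)
  have hba : ⟪b,a⟫ = 0 := by rw [real_inner_comm]; exact hab
  have hac := cross_ortho_left a b
  have hbc := cross_ortho_right a b
  have hca : ⟪cross a b, a⟫ = 0 := by rw [real_inner_comm]; exact hac
  have hcb : ⟪cross a b, b⟫ = 0 := by rw [real_inner_comm]; exact hbc
  simp only [frame, Set.mem_insert_iff, Set.mem_singleton_iff] at hx hy ⊢
  rcases hx with rfl|rfl|rfl|rfl|rfl|rfl <;> rcases hy with rfl|rfl|rfl|rfl|rfl|rfl <;>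
    simp [inner_neg_left, inner_neg_right, haa, hbb, hcc, hab, hba, hac, hbc, hca, hcb, ha, hb, cross_unit ha hb hab]

lemma notbad_iff {t : ℝ} : t ∉ ({-1,0,1} : Set ℝ) ↔ (t^2 ≠ 0 ∧ t^2 ≠ 1) := by
  simp only [Set.mem_insert_iff, Set.mem_singleton_iff]
  constructor
  · intro h
    push_neg at h
    obtain ⟨h1, h2, h3⟩ := h
    constructor
    · intro hc; exact h2 (by nlinarith)
    · intro hc
      have : (t-1)*(t+1) = 0 := by nlinarith
      rcases mul_eq_zero.mp this with h|h
      · exact h3 (by linarith)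
      · exact h1 (by linarith)
  · rintro ⟨h1, h2⟩ (rfl|rfl|rfl) <;> norm_num at *

set_option maxHeartbeats 1000000 in
lemma factR {a v b : E3} (ha : ‖a‖ = 1) (hv : ‖v‖ = 1) (hb : ‖b‖ = 1)
    (hav : ⟪a,v⟫ = 0) (hvb : ⟪v,b⟫ = 0) (hred : ⟪a,b⟫ ∉ ({-1,0,1} : Set ℝ)) :
    ∀ x ∈ frame a v, ∀ y ∈ frame v b, ⟪x,v⟫ = 0 → ⟪y,v⟫ = 0 →
      ⟪x,y⟫ ∉ ({-1,0,1} : Set ℝ) := by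
  intro x hx y hy hxv hyv
  have hvv := unit_inner hv
  have hcc : ⟪cross a v, cross v b⟫ = -⟪a,b⟫ := by
    rw [binet, hav, hvb, hvv]; ring
  have hac1 : ⟪a, cross v b⟫ = ⟪cross a v, b⟫ := triple a v b
  have hp : ⟪b,a⟫^2 + ⟪b,v⟫^2 + ⟪b,cross a v⟫^2 = 1 := parseval1 ha hv hav hb
  have hba : ⟪b,a⟫ = ⟪a,b⟫ := real_inner_comm a b
  have hbv : ⟪b,v⟫ = 0 := by rw [real_inner_comm]; exact hvb
  have hbc0 : ⟪b,cross a v⟫ = ⟪cross a v, b⟫ := real_inner_comm _ b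
  rw [hba, hbv, hbc0] at hp
  have htbad := notbad_iff.mp hred
  have hsbad : ⟪cross a v, b⟫ ∉ ({-1,0,1} : Set ℝ) := by
    rw [notbad_iff]
    constructor
    · intro h0; exact htbad.2 (by nlinarith)
    · intro h1; exact htbad.1 (by nlinarith)
  have hnt : -⟪a,b⟫ ∉ ({-1,0,1} : Set ℝ) := by
    rw [notbad_iff] at hred ⊢
    constructor <;> intro h <;> [exact hred.1 (by nlinarith); exact hred.2 (by nlinarith)]
  have hns : -⟪cross a v, b⟫ ∉ ({-1,0,1} : Set ℝ) := by
    rw [notbad_iff] at hsbad ⊢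
    constructor <;> intro h <;> [exact hsbad.1 (by nlinarith); exact hsbad.2 (by nlinarith)]
  have hx' : x = a ∨ x = -a ∨ x = cross a v ∨ x = -(cross a v) := by
    simp only [frame, Set.mem_insert_iff, Set.mem_singleton_iff] at hx
    rcases hx with rfl|rfl|rfl|rfl|rfl|rfl
    · left; rfl
    · right; left; rfl
    · exact absurd hxv (by rw [hvv]; norm_num)
    · exact absurd hxv (by rw [inner_neg_left, hvv]; norm_num)
    · right; right; left; rfl
    · right; right; right; rfl
  have hy' : y = b ∨ y = -b ∨ y = cross v b ∨ y = -(cross v b) := by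
    simp only [frame, Set.mem_insert_iff, Set.mem_singleton_iff] at hy
    rcases hy with rfl|rfl|rfl|rfl|rfl|rfl
    · exact absurd hyv (by rw [hvv]; norm_num)
    · exact absurd hyv (by rw [inner_neg_left, hvv]; norm_num)
    · left; rfl
    · right; left; rfl
    · right; right; left; rfl
    · right; right; right; rfl
  rcases hx' with rfl|rfl|rfl|rfl <;> rcases hy' with rfl|rfl|rfl|rfl <;>
    (try simp only [inner_neg_left, inner_neg_right, neg_neg, hcc, hac1]) <;>
    first | exact hred | exact hnt | exact hsbad | exact hns

set_option maxHeartbeats 1600000 in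
lemma core (v1 v2 v3 v4 : E3)
    (u1 : ‖v1‖ = 1) (u2 : ‖v2‖ = 1) (u3 : ‖v3‖ = 1) (u4 : ‖v4‖ = 1)
    (ne13 : v1 ≠ v3) (ne24 : v2 ≠ v4)
    (c12 : ⟪v1,v2⟫ ∈ ({-1,0,1} : Set ℝ)) (c23 : ⟪v2,v3⟫ ∈ ({-1,0,1} : Set ℝ))
    (c34 : ⟪v3,v4⟫ ∈ ({-1,0,1} : Set ℝ)) (c41 : ⟪v4,v1⟫ ∈ ({-1,0,1} : Set ℝ))
    (ne12 : v1 ≠ v2) (ne23 : v2 ≠ v3) (ne34 : v3 ≠ v4) (ne41 : v4 ≠ v1)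
    (r2 : ⟪v1,v2⟫ = 0 → ⟪v2,v3⟫ = 0 → ⟪v1,v3⟫ ∉ ({-1,0,1} : Set ℝ))
    (r3 : ⟪v2,v3⟫ = 0 → ⟪v3,v4⟫ = 0 → ⟪v2,v4⟫ ∉ ({-1,0,1} : Set ℝ))
    (r4 : ⟪v3,v4⟫ = 0 → ⟪v4,v1⟫ = 0 → ⟪v3,v1⟫ ∉ ({-1,0,1} : Set ℝ)) :
    ∃ u w : E3, ‖u‖ = 1 ∧ ‖w‖ = 1 ∧ ⟪u,w⟫ = 0 ∧
      ({v1,v2,v3,v4} : Set E3) = {u, -u, w, -w} := by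
  have conv : ∀ x y : E3, ‖x‖ = 1 → ‖y‖ = 1 → x ≠ y → ⟪x,y⟫ ∈ ({-1,0,1} : Set ℝ) →
      y = -x ∨ ⟪x,y⟫ = 0 := by
    intro x y hx hy hne hc
    simp only [Set.mem_insert_iff, Set.mem_singleton_iff] at hc
    rcases hc with h|h|h
    · left
      have h2 := inner_eq_neg_one_eq hx hy h
      rw [h2]; simp
    · right; exact h
    · exact absurd (inner_eq_one_eq hx hy h) hne
  rcases conv v1 v2 u1 u2 ne12 c12 with h12 | o12
  · rcases conv v2 v3 u2 u3 ne23 c23 with h23 | o23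
    · exfalso; rw [h12, neg_neg] at h23; exact ne13 h23.symm
    · rcases conv v3 v4 u3 u4 ne34 c34 with h34 | o34
      · refine ⟨v1, v3, u1, u3, ?_, ?_⟩
        · rw [h12, inner_neg_left] at o23; linarith
        · rw [h12, h34]
      · exfalso
        have hv24 : ⟪v2,v4⟫ ∉ ({-1,0,1} : Set ℝ) := r3 o23 o34
        rcases conv v4 v1 u4 u1 ne41 c41 with h41 | o41
        · rw [h41] at h12; rw [neg_neg] at h12; exact ne24 h12
        · apply hv24
          rw [h12, inner_neg_left]
          have h0 : ⟪v1,v4⟫ = 0 := by linarith [real_inner_comm v4 v1]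
          rw [h0]; norm_num
  · rcases conv v2 v3 u2 u3 ne23 c23 with h23 | o23
    · rcases conv v3 v4 u3 u4 ne34 c34 with h34 | o34
      · exfalso; rw [h23, neg_neg] at h34; exact ne24 h34.symm
      · rcases conv v4 v1 u4 u1 ne41 c41 with h41 | o41
        · refine ⟨v2, v4, u2, u4, ?_, ?_⟩
          · rw [h23, inner_neg_left] at o34; linarith
          · rw [h23, h41]
            ext x
            simp only [Set.mem_insert_iff, Set.mem_singleton_iff]
            tauto
        · exfalso
          have hv31 : ⟪v3,v1⟫ ∉ ({-1,0,1} : Set ℝ) := r4 o34 o41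
          apply hv31
          rw [h23, inner_neg_left]
          have h0 : ⟪v2,v1⟫ = 0 := by linarith [real_inner_comm v1 v2]
          rw [h0]; norm_num
    · have ht := r2 o12 o23
      rcases conv v3 v4 u3 u4 ne34 c34 with h34 | o34
      · exfalso
        rcases conv v4 v1 u4 u1 ne41 c41 with h41 | o41
        · rw [h34, neg_neg] at h41; exact ne13 h41
        · apply ht
          rw [h34, inner_neg_left] at o41
          have h0 : ⟪v1,v3⟫ = 0 := by linarith [real_inner_comm v1 v3]
          rw [h0]; norm_num
      · exfalso
        rcases conv v4 v1 u4 u1 ne41 c41 with h41 | o41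
        · apply ht
          have h0 : ⟪v1,v3⟫ = 0 := by
            rw [h41, inner_neg_left]; linarith [real_inner_comm v3 v4]
          rw [h0]; norm_num
        · have hv24 : ⟪v2,v4⟫ ∉ ({-1,0,1} : Set ℝ) := r3 o23 o34
          have hp3 := parseval2 u1 u2 o12 v3 v3
          have hp4 := parseval2 u1 u2 o12 v4 v4
          have hp34 := parseval2 u1 u2 o12 v4 v3
          have h31 : ⟪v3,v1⟫ = ⟪v1,v3⟫ := real_inner_comm v1 v3
          have h32 : ⟪v3,v2⟫ = 0 := by rw [real_inner_comm]; exact o23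
          have h43 : ⟪v4,v3⟫ = 0 := by rw [real_inner_comm]; exact o34
          rw [unit_inner u3, h31, h32] at hp3
          rw [unit_inner u4, o41] at hp4
          rw [h43, h32, o41] at hp34
          have htsq := notbad_iff.mp ht
          have hz3 : ⟪v3, cross v1 v2⟫ ≠ 0 := by
            intro h0
            rw [h0] at hp3
            exact htsq.2 (by nlinarith)
          have hz4 : ⟪v4, cross v1 v2⟫ = 0 := by
            have hm : ⟪v4, cross v1 v2⟫ * ⟪v3, cross v1 v2⟫ = 0 := by linarith
            rcases mul_eq_zero.mp hm with h|h
            · exact h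
            · exact absurd h hz3
          apply notbad_iff.mp hv24 |>.2
          have h42 : ⟪v4,v2⟫ = ⟪v2,v4⟫ := real_inner_comm v2 v4
          rw [hz4, h42] at hp4
          nlinarith [hp4]

lemma four_elems (T : Finset ℕ) (h : T.card = 4) (h0 : 0 ∈ T) :
    ∃ d1 d2 d3 : ℕ, 0 < d1 ∧ d1 < d2 ∧ d2 < d3 ∧
      (∀ k, k ∈ T ↔ (k = 0 ∨ k = d1 ∨ k = d2 ∨ k = d3)) := by
  set T1 := T.erase 0 with hT1
  have hc1 : T1.card = 3 := by rw [hT1, Finset.card_erase_of_mem h0, h]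
  have hne1 : T1.Nonempty := Finset.card_pos.mp (by omega)
  set d1 := T1.min' hne1 with hd1
  have hd1m : d1 ∈ T1 := T1.min'_mem hne1
  set T2 := T1.erase d1 with hT2
  have hc2 : T2.card = 2 := by rw [hT2, Finset.card_erase_of_mem hd1m, hc1]
  have hne2 : T2.Nonempty := Finset.card_pos.mp (by omega)
  set d2 := T2.min' hne2 with hd2
  have hd2m : d2 ∈ T2 := T2.min'_mem hne2
  set T3 := T2.erase d2 with hT3
  have hc3 : T3.card = 1 := by rw [hT3, Finset.card_erase_of_mem hd2m, hc2]
  have hne3 : T3.Nonempty := Finset.card_pos.mp (by omega)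
  set d3 := T3.min' hne3 with hd3
  have hd3m : d3 ∈ T3 := T3.min'_mem hne3
  have hd2T1 : d2 ∈ T1 := Finset.mem_of_mem_erase hd2m
  have hd3T2 : d3 ∈ T2 := Finset.mem_of_mem_erase hd3m
  have hd3T1 : d3 ∈ T1 := Finset.mem_of_mem_erase hd3T2
  have hd1T : d1 ∈ T := Finset.mem_of_mem_erase hd1m
  have hd2T : d2 ∈ T := Finset.mem_of_mem_erase hd2T1
  have hd3T : d3 ∈ T := Finset.mem_of_mem_erase hd3T1
  have h1pos : 0 < d1 := Nat.pos_of_ne_zero (Finset.ne_of_mem_erase hd1m)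
  have h12 : d1 < d2 :=
    lt_of_le_of_ne (T1.min'_le d2 hd2T1) (Ne.symm (Finset.ne_of_mem_erase hd2m))
  have h23 : d2 < d3 :=
    lt_of_le_of_ne (T2.min'_le d3 hd3T2) (Ne.symm (Finset.ne_of_mem_erase hd3m))
  refine ⟨d1, d2, d3, h1pos, h12, h23, ?_⟩
  have hsub : ({0, d1, d2, d3} : Finset ℕ) ⊆ T := by
    intro k hk
    simp only [Finset.mem_insert, Finset.mem_singleton] at hk
    rcases hk with rfl|rfl|rfl|rfl <;> assumption
  have hcard4 : ({0, d1, d2, d3} : Finset ℕ).card = 4 := by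
    rw [Finset.card_insert_of_notMem (by simp; omega),
        Finset.card_insert_of_notMem (by simp; omega),
        Finset.card_insert_of_notMem (by simp; omega),
        Finset.card_singleton]
  have heq : ({0, d1, d2, d3} : Finset ℕ) = T :=
    Finset.eq_of_subset_of_card_le hsub (by omega)
  intro k
  rw [← heq]
  simp only [Finset.mem_insert, Finset.mem_singleton]

end PolygonPlusAux


open PolygonPlusAux

set_option maxHeartbeats 4000000

/-- If a closed `π/2`-polygon on the unit sphere in `ℝ³` (a cyclic sequence
`p : ZMod n → ℝ³`, `n ≥ 3`, of pairwise distinct unit vectors with consecutive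
points orthogonal) has exactly four red vertices (vertices `i` with
`⟪p (i-1), p (i+1)⟫ ∉ {-1, 0, 1}`), then there are orthogonal unit vectors `u, w`
such that the set of red vertices is exactly `{u, -u, w, -w}`: the red vertices
form a `+` in 3-space. -/
theorem polygon_four_red_vertices_plus_shape
    (n : ℕ) (hn : 3 ≤ n) (p : ZMod n → EuclideanSpace ℝ (Fin 3))
    (hinj : Function.Injective p)
    (hunit : ∀ i, ‖p i‖ = 1)
    (horth : ∀ i, ⟪p i, p (i + 1)⟫ = 0)
    (hred4 : {i : ZMod n | ⟪p (i - 1), p (i + 1)⟫ ∉ ({-1, 0, 1} : Set ℝ)}.ncard = 4) :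
    ∃ u w : EuclideanSpace ℝ (Fin 3), ‖u‖ = 1 ∧ ‖w‖ = 1 ∧ ⟪u, w⟫ = 0 ∧
      p '' {i : ZMod n | ⟪p (i - 1), p (i + 1)⟫ ∉ ({-1, 0, 1} : Set ℝ)} =
        {u, -u, w, -w} := by
  haveI : NeZero n := ⟨by omega⟩
  classical
  set S := {i : ZMod n | ⟪p (i - 1), p (i + 1)⟫ ∉ ({-1, 0, 1} : Set ℝ)} with hS_def
  have hmemS : ∀ i : ZMod n, i ∈ S ↔ ⟪p (i - 1), p (i + 1)⟫ ∉ ({-1, 0, 1} : Set ℝ) := by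
    intro i; rw [hS_def]; rfl
  -- green step for frames
  have hgreenstep : ∀ i : ZMod n, i ∉ S →
      frame (p i) (p (i+1)) = frame (p (i-1)) (p i) := by
    intro i hg
    have h1 : (i - 1) + 1 = i := by ring
    have hab : ⟪p (i-1), p i⟫ = 0 := by have h := horth (i-1); rwa [h1] at h
    have hg' : ⟪p (i-1), p (i+1)⟫ ∈ ({-1,0,1} : Set ℝ) := by
      rw [hmemS] at hg; exact not_not.mp hg
    exact frame_green (hunit _) (hunit _) (hunit _) hab (horth i) hg'
  -- frames constant along green runs
  have hrun : ∀ (i : ZMod n) (d : ℕ), (∀ j : ℕ, 1 ≤ j → j ≤ d → i + (j:ZMod n) ∉ S) →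
      frame (p (i + (d:ℕ))) (p (i + (d:ℕ) + 1)) = frame (p i) (p (i+1)) := by
    intro i d
    induction d with
    | zero => intro _; norm_num
    | succ d ih =>
      intro h
      have hmem : i + ((d+1:ℕ):ZMod n) ∉ S := h (d+1) (by omega) le_rfl
      have h1 := hgreenstep _ hmem
      have h3 : i + ((d+1:ℕ):ZMod n) = i + (d:ℕ) + 1 := by push_cast; ring
      rw [h3] at h1 ⊢
      have h4 : i + (d:ZMod n) + 1 - 1 = i + (d:ℕ) := by ring
      rw [h4] at h1
      rw [h1]
      exact ih (fun j hj1 hj2 => h j hj1 (by omega))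
  -- pick a red vertex
  obtain ⟨r1, hr1⟩ : S.Nonempty := Set.nonempty_of_ncard_ne_zero (by rw [hred4]; norm_num)
  have hSfin : S.Finite := Set.toFinite S
  -- offsets of red vertices
  set T : Finset ℕ := (Finset.range n).filter (fun k => r1 + (k:ZMod n) ∈ S) with hT_def
  have hTmem : ∀ k, k ∈ T ↔ k < n ∧ r1 + (k:ZMod n) ∈ S := by
    intro k
    rw [hT_def, Finset.mem_filter, Finset.mem_range]
  have hTcard : T.card = 4 := by
    have himg : T = hSfin.toFinset.image (fun i => (i - r1).val) := by
      ext k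
      rw [hTmem, Finset.mem_image]
      constructor
      · rintro ⟨hk, hmem⟩
        refine ⟨r1 + (k:ZMod n), hSfin.mem_toFinset.mpr hmem, ?_⟩
        rw [add_sub_cancel_left, ZMod.val_cast_of_lt hk]
      · rintro ⟨i, hi, rfl⟩
        refine ⟨ZMod.val_lt _, ?_⟩
        have h5 : ((i - r1).val : ZMod n) = i - r1 := (ZMod.natCast_val _).trans (ZMod.cast_id n _)
        rw [h5]
        have h6 : r1 + (i - r1) = i := by ring
        rw [h6]
        exact hSfin.mem_toFinset.mp hi
    rw [himg, Finset.card_image_of_injOn, ← Set.ncard_eq_toFinset_card S hSfin, hred4]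
    intro i _ j _ hij
    simp only at hij
    have hi' : ((i - r1).val : ZMod n) = i - r1 := (ZMod.natCast_val _).trans (ZMod.cast_id n _)
    have hj' : ((j - r1).val : ZMod n) = j - r1 := (ZMod.natCast_val _).trans (ZMod.cast_id n _)
    have h7 : i - r1 = j - r1 := by rw [← hi', ← hj', hij]
    have h8 := congrArg (fun z => z + r1) h7
    simpa using h8
  have h0T : 0 ∈ T := by
    rw [hTmem]
    refine ⟨by omega, ?_⟩
    simpa using hr1
  obtain ⟨d1, d2, d3, hd1pos, h12, h23, hcov⟩ := four_elems T hTcard h0T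
  have hd1T := (hcov d1).mpr (Or.inr (Or.inl rfl))
  have hd2T := (hcov d2).mpr (Or.inr (Or.inr (Or.inl rfl)))
  have hd3T := (hcov d3).mpr (Or.inr (Or.inr (Or.inr rfl)))
  have hd1n : d1 < n := ((hTmem d1).mp hd1T).1
  have hd2n : d2 < n := ((hTmem d2).mp hd2T).1
  have hd3n : d3 < n := ((hTmem d3).mp hd3T).1
  have hred_at : ∀ k : ℕ, k < n → (r1 + (k:ZMod n) ∈ S ↔ (k = 0 ∨ k = d1 ∨ k = d2 ∨ k = d3)) := by
    intro k hk
    rw [← hcov k, hTmem]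
    exact (and_iff_right hk).symm
  have frun : ∀ da m : ℕ, da + m < n →
      (∀ j : ℕ, 1 ≤ j → j ≤ m → ¬((da + j = 0) ∨ da + j = d1 ∨ da + j = d2 ∨ da + j = d3)) →
      frame (p (r1 + ((da + m:ℕ):ZMod n))) (p (r1 + ((da + m:ℕ):ZMod n) + 1))
        = frame (p (r1 + (da:ZMod n))) (p (r1 + (da:ZMod n) + 1)) := by
    intro da m hmn hgap
    have hgr : ∀ j : ℕ, 1 ≤ j → j ≤ m → (r1 + (da:ZMod n)) + (j:ZMod n) ∉ S := by
      intro j hj1 hj2 hmem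
      have hcast : (r1 + (da:ZMod n)) + (j:ZMod n) = r1 + ((da + j:ℕ):ZMod n) := by
        push_cast; ring
      rw [hcast] at hmem
      exact hgap j hj1 hj2 ((hred_at (da+j) (by omega)).mp hmem)
    have h9 := hrun (r1 + (da:ZMod n)) m hgr
    have hcast2 : (r1 + (da:ZMod n)) + (m:ZMod n) = r1 + ((da + m:ℕ):ZMod n) := by
      push_cast; ring
    rw [hcast2] at h9
    exact h9
  have hsucc : ∀ a b : ℕ, a = b + 1 → ∀ z : ZMod n, z + ((b:ℕ):ZMod n) + 1 = z + (a:ZMod n) := by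
    intro a b hab z; subst hab; push_cast; ring
  have e1 := hsucc d1 (d1-1) (by omega) r1
  have e2 := hsucc d2 (d2-1) (by omega) r1
  have e3 := hsucc d3 (d3-1) (by omega) r1
  have e4 : r1 + ((n-1:ℕ):ZMod n) + 1 = r1 := by
    rw [hsucc n (n-1) (by omega) r1, ZMod.natCast_self, add_zero]
  -- the four frame runs
  have hF1 : frame (p (r1 + ((d1-1:ℕ):ZMod n))) (p (r1 + ((d1-1:ℕ):ZMod n) + 1))
      = frame (p (r1 + ((0:ℕ):ZMod n))) (p (r1 + ((0:ℕ):ZMod n) + 1)) := by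
    have h := frun 0 (d1-1) (by omega) (by intro j hj1 hj2; omega)
    rwa [show 0 + (d1-1) = d1 - 1 from by omega] at h
  have hF2 : frame (p (r1 + ((d2-1:ℕ):ZMod n))) (p (r1 + ((d2-1:ℕ):ZMod n) + 1))
      = frame (p (r1 + (d1:ZMod n))) (p (r1 + (d1:ZMod n) + 1)) := by
    have h := frun d1 (d2-d1-1) (by omega) (by intro j hj1 hj2; omega)
    rwa [show d1 + (d2-d1-1) = d2 - 1 from by omega] at h
  have hF3 : frame (p (r1 + ((d3-1:ℕ):ZMod n))) (p (r1 + ((d3-1:ℕ):ZMod n) + 1))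
      = frame (p (r1 + (d2:ZMod n))) (p (r1 + (d2:ZMod n) + 1)) := by
    have h := frun d2 (d3-d2-1) (by omega) (by intro j hj1 hj2; omega)
    rwa [show d2 + (d3-d2-1) = d3 - 1 from by omega] at h
  have hF4 : frame (p (r1 + ((n-1:ℕ):ZMod n))) (p (r1 + ((n-1:ℕ):ZMod n) + 1))
      = frame (p (r1 + (d3:ZMod n))) (p (r1 + (d3:ZMod n) + 1)) := by
    have h := frun d3 (n-1-d3) (by omega) (by intro j hj1 hj2; omega)
    rwa [show d3 + (n-1-d3) = n - 1 from by omega] at h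
  -- normalize second generators
  rw [e1] at hF1
  rw [e2] at hF2
  rw [e3] at hF3
  rw [e4] at hF4
  have e0 : r1 + ((0:ℕ):ZMod n) = r1 := by norm_num
  rw [e0] at hF1
  have e01 : r1 + ((1:ℕ):ZMod n) = r1 + 1 := by norm_num
  -- orthonormal pair for each frame presentation
  have hav1 : ⟪p (r1 + ((d1-1:ℕ):ZMod n)), p (r1 + (d1:ZMod n))⟫ = 0 := by
    have h := horth (r1 + ((d1-1:ℕ):ZMod n)); rwa [e1] at h
  have hav2 : ⟪p (r1 + ((d2-1:ℕ):ZMod n)), p (r1 + (d2:ZMod n))⟫ = 0 := by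
    have h := horth (r1 + ((d2-1:ℕ):ZMod n)); rwa [e2] at h
  have hav3 : ⟪p (r1 + ((d3-1:ℕ):ZMod n)), p (r1 + (d3:ZMod n))⟫ = 0 := by
    have h := horth (r1 + ((d3-1:ℕ):ZMod n)); rwa [e3] at h
  have hav4 : ⟪p (r1 + ((n-1:ℕ):ZMod n)), p r1⟫ = 0 := by
    have h := horth (r1 + ((n-1:ℕ):ZMod n)); rwa [e4] at h
  -- memberships
  have hx1 : p r1 ∈ frame (p (r1 + ((d1-1:ℕ):ZMod n))) (p (r1 + (d1:ZMod n))) := by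
    rw [hF1]; exact mem_frame_left _ _
  have hx2 : p (r1 + (d1:ZMod n)) ∈ frame (p (r1 + ((d2-1:ℕ):ZMod n))) (p (r1 + (d2:ZMod n))) := by
    rw [hF2]; exact mem_frame_left _ _
  have hx3 : p (r1 + (d2:ZMod n)) ∈ frame (p (r1 + ((d3-1:ℕ):ZMod n))) (p (r1 + (d3:ZMod n))) := by
    rw [hF3]; exact mem_frame_left _ _
  have hx4 : p (r1 + (d3:ZMod n)) ∈ frame (p (r1 + ((n-1:ℕ):ZMod n))) (p r1) := by
    rw [hF4]; exact mem_frame_left _ _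
  have hy2 : p (r1 + (d2:ZMod n)) ∈ frame (p (r1 + (d1:ZMod n))) (p (r1 + (d1:ZMod n) + 1)) := by
    rw [← hF2]; exact mem_frame_right _ _
  have hy3 : p (r1 + (d3:ZMod n)) ∈ frame (p (r1 + (d2:ZMod n))) (p (r1 + (d2:ZMod n) + 1)) := by
    rw [← hF3]; exact mem_frame_right _ _
  have hy4 : p r1 ∈ frame (p (r1 + (d3:ZMod n))) (p (r1 + (d3:ZMod n) + 1)) := by
    rw [← hF4]; exact mem_frame_right _ _
  -- red hypotheses at the red vertices
  have hredv : ∀ k : ℕ, (k = 0 ∨ k = d1 ∨ k = d2 ∨ k = d3) → k < n →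
      ⟪p (r1 + (k:ZMod n) - 1), p (r1 + (k:ZMod n) + 1)⟫ ∉ ({-1,0,1} : Set ℝ) := by
    intro k hk hkn
    have := (hred_at k hkn).mpr hk
    rwa [hmemS] at this
  have esub1 : r1 + (d1:ZMod n) - 1 = r1 + ((d1-1:ℕ):ZMod n) := by rw [← e1]; ring
  have esub2 : r1 + (d2:ZMod n) - 1 = r1 + ((d2-1:ℕ):ZMod n) := by rw [← e2]; ring
  have esub3 : r1 + (d3:ZMod n) - 1 = r1 + ((d3-1:ℕ):ZMod n) := by rw [← e3]; ring
  have esub0 : r1 - 1 = r1 + ((n-1:ℕ):ZMod n) := (eq_sub_iff_add_eq.mpr e4).symm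
  have hred1 : ⟪p (r1 + ((n-1:ℕ):ZMod n)), p (r1 + 1)⟫ ∉ ({-1,0,1} : Set ℝ) := by
    have h := hredv 0 (Or.inl rfl) (by omega)
    rw [e0] at h
    rwa [esub0] at h
  have hred2 : ⟪p (r1 + ((d1-1:ℕ):ZMod n)), p (r1 + (d1:ZMod n) + 1)⟫ ∉ ({-1,0,1} : Set ℝ) := by
    have h := hredv d1 (Or.inr (Or.inl rfl)) hd1n
    rwa [esub1] at h
  have hred3 : ⟪p (r1 + ((d2-1:ℕ):ZMod n)), p (r1 + (d2:ZMod n) + 1)⟫ ∉ ({-1,0,1} : Set ℝ) := by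
    have h := hredv d2 (Or.inr (Or.inr (Or.inl rfl))) hd2n
    rwa [esub2] at h
  have hred4' : ⟪p (r1 + ((d3-1:ℕ):ZMod n)), p (r1 + (d3:ZMod n) + 1)⟫ ∉ ({-1,0,1} : Set ℝ) := by
    have h := hredv d3 (Or.inr (Or.inr (Or.inr rfl))) hd3n
    rwa [esub3] at h
  -- factR instances
  have R2 := factR (hunit _) (hunit _) (hunit _) hav1 (horth (r1 + (d1:ZMod n))) hred2
    (p r1) hx1 (p (r1 + (d2:ZMod n))) hy2
  have R3 := factR (hunit _) (hunit _) (hunit _) hav2 (horth (r1 + (d2:ZMod n))) hred3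
    (p (r1 + (d1:ZMod n))) hx2 (p (r1 + (d3:ZMod n))) hy3
  have R4 := factR (hunit _) (hunit _) (hunit _) hav3 (horth (r1 + (d3:ZMod n))) hred4'
    (p (r1 + (d2:ZMod n))) hx3 (p r1) hy4
  -- consecutive inner products lie in {-1,0,1}
  have c12 := frame_inner (hunit _) (hunit _) hav1 hx1 (mem_frame_right
    (p (r1 + ((d1-1:ℕ):ZMod n))) (p (r1 + (d1:ZMod n))))
  have c23 := frame_inner (hunit _) (hunit _) hav2 hx2 (mem_frame_right
    (p (r1 + ((d2-1:ℕ):ZMod n))) (p (r1 + (d2:ZMod n))))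
  have c34 := frame_inner (hunit _) (hunit _) hav3 hx3 (mem_frame_right
    (p (r1 + ((d3-1:ℕ):ZMod n))) (p (r1 + (d3:ZMod n))))
  have c41 := frame_inner (hunit _) (hunit _) hav4 hx4 (mem_frame_right
    (p (r1 + ((n-1:ℕ):ZMod n))) (p r1))
  -- distinctness
  have hne : ∀ a b : ℕ, a < b → b < n → p (r1 + (a:ZMod n)) ≠ p (r1 + (b:ZMod n)) := by
    intro a b hab hbn h
    have h2 := hinj h
    have h3 : (a:ZMod n) = (b:ZMod n) := by
      have h4 := congrArg (fun z => z - r1) h2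
      simpa using h4
    have h4 := congrArg ZMod.val h3
    rw [ZMod.val_cast_of_lt (by omega), ZMod.val_cast_of_lt hbn] at h4
    omega
  have hne0 : ∀ b : ℕ, 0 < b → b < n → p r1 ≠ p (r1 + (b:ZMod n)) := by
    intro b hb hbn
    have h := hne 0 b hb hbn
    rwa [Nat.cast_zero, add_zero] at h
  have ne12 : p r1 ≠ p (r1 + (d1:ZMod n)) := hne0 d1 hd1pos hd1n
  have ne13 : p r1 ≠ p (r1 + (d2:ZMod n)) := hne0 d2 (by omega) hd2n
  have ne14 : p r1 ≠ p (r1 + (d3:ZMod n)) := hne0 d3 (by omega) hd3n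
  have ne23 : p (r1 + (d1:ZMod n)) ≠ p (r1 + (d2:ZMod n)) := hne d1 d2 h12 hd2n
  have ne24 : p (r1 + (d1:ZMod n)) ≠ p (r1 + (d3:ZMod n)) := hne d1 d3 (by omega) hd3n
  have ne34 : p (r1 + (d2:ZMod n)) ≠ p (r1 + (d3:ZMod n)) := hne d2 d3 h23 hd3n
  -- apply the core lemma
  obtain ⟨u, w, hu, hw, huw, hset⟩ :=
    core (p r1) (p (r1 + (d1:ZMod n))) (p (r1 + (d2:ZMod n))) (p (r1 + (d3:ZMod n)))
      (hunit _) (hunit _) (hunit _) (hunit _) ne13 ne24 c12 c23 c34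
      c41
      ne12 ne23 ne34 (Ne.symm ne14)
      (fun h h' => R2 h (by rw [real_inner_comm]; exact h'))
      (fun h h' => R3 h (by rw [real_inner_comm]; exact h'))
      (fun h h' => R4 h (by rw [real_inner_comm]; exact h'))
  -- identify the red set
  have hSeq : S = {r1, r1 + (d1:ZMod n), r1 + (d2:ZMod n), r1 + (d3:ZMod n)} := by
    ext i
    simp only [Set.mem_insert_iff, Set.mem_singleton_iff]
    constructor
    · intro hi
      have hkn : (i - r1).val < n := ZMod.val_lt _
      have hieq : r1 + (((i - r1).val : ℕ):ZMod n) = i := by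
        rw [(ZMod.natCast_val _).trans (ZMod.cast_id n _)]; ring
      have hred' := (hred_at _ hkn).mp (by rw [hieq]; exact hi)
      rcases hred' with h|h|h|h
      · left; rw [← hieq, h]; simp
      · right; left; rw [← hieq, h]
      · right; right; left; rw [← hieq, h]
      · right; right; right; rw [← hieq, h]
    · intro hi
      rcases hi with rfl|rfl|rfl|rfl
      · exact hr1
      · exact (hred_at d1 hd1n).mpr (Or.inr (Or.inl rfl))
      · exact (hred_at d2 hd2n).mpr (Or.inr (Or.inr (Or.inl rfl)))
      · exact (hred_at d3 hd3n).mpr (Or.inr (Or.inr (Or.inr rfl)))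
  refine ⟨u, w, hu, hw, huw, ?_⟩
  rw [hSeq, Set.image_insert_eq, Set.image_insert_eq, Set.image_insert_eq,
    Set.image_singleton]
  exact hset
end

section
/- There exists a closed π/2-polygon on the unit sphere in ℝ³ with five vertices, all of which are red. Equivalently: it is possible for a vertex of a polyhedron all of whose faces are rectangles to have exactly five incident edges, none of whose dihedral angles is a multiple of π/2. -/
open scoped RealInnerProductSpace

noncomputable def redVec (a b c : ℝ) : EuclideanSpace ℝ (Fin 3) :=
  (WithLp.equiv 2 (Fin 3 → ℝ)).symm ![a, b, c]

lemma redVec_inj {a b c d e f : ℝ} (h : redVec a b c = redVec d e f) :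
    a = d ∧ b = e ∧ c = f := by
  have h' := congrArg (WithLp.equiv 2 (Fin 3 → ℝ)) h
  simp only [redVec, Equiv.apply_symm_apply] at h'
  exact ⟨congrFun h' 0, congrFun h' 1, congrFun h' 2⟩

lemma redVec_inner (a b c d e f : ℝ) :
    ⟪redVec a b c, redVec d e f⟫ = a * d + b * e + c * f := by
  simp [redVec, PiLp.inner_apply, Fin.sum_univ_three]
  ring

lemma redVec_norm (a b c : ℝ) : ‖redVec a b c‖ = Real.sqrt (a^2 + b^2 + c^2) := by
  simp [redVec, EuclideanSpace.norm_eq, Fin.sum_univ_three, sq]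

noncomputable def redP : ZMod 5 → EuclideanSpace ℝ (Fin 3) :=
  ![redVec 1 0 0,
    redVec 0 1 0,
    redVec (3/5) 0 (4/5),
    redVec (-(2*Real.sqrt 2/5)) (Real.sqrt 2/2) (3*Real.sqrt 2/10),
    redVec 0 (3*Real.sqrt 34/34) (-(5*Real.sqrt 34/34))]

lemma s2 : Real.sqrt 2 ^ 2 = 2 := Real.sq_sqrt (by norm_num)
lemma s34 : Real.sqrt 34 ^ 2 = 34 := Real.sq_sqrt (by norm_num)
lemma s2pos : 0 < Real.sqrt 2 := Real.sqrt_pos.2 (by norm_num)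
lemma s34pos : 0 < Real.sqrt 34 := Real.sqrt_pos.2 (by norm_num)

lemma redVec_norm_one {a b c : ℝ} (h : a^2 + b^2 + c^2 = 1) : ‖redVec a b c‖ = 1 := by
  rw [redVec_norm, h, Real.sqrt_one]

lemma red_notin {x : ℝ} (h0 : x^2 ≠ 0) (h1 : x^2 ≠ 1) :
    x ∉ ({-1, 0, 1} : Set ℝ) := by
  intro hx
  rcases hx with h | h | h <;> subst h <;> simp_all

/-- There exists a closed `π/2`-polygon on the unit sphere in `ℝ³` with five
vertices—a cyclic sequence `p : ZMod 5 → ℝ³` of pairwise distinct unit vectors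
with consecutive points orthogonal—all of whose vertices are red, i.e.
`⟪p (i-1), p (i+1)⟫ ∉ {-1, 0, 1}` for every `i`. -/
theorem exists_polygon_five_red_vertices :
    ∃ p : ZMod 5 → EuclideanSpace ℝ (Fin 3),
      Function.Injective p ∧
      (∀ i, ‖p i‖ = 1) ∧
      (∀ i, ⟪p i, p (i + 1)⟫ = 0) ∧
      (∀ i, ⟪p (i - 1), p (i + 1)⟫ ∉ ({-1, 0, 1} : Set ℝ)) := by
  refine ⟨redP, ?_, ?_, ?_, ?_⟩
  · intro a b h
    fin_cases a <;> fin_cases b <;>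
    first
    | rfl
    | (obtain ⟨h1, h2, h3⟩ := redVec_inj h
       nlinarith [s2, s34, s2pos, s34pos])
  · intro i
    fin_cases i
    · exact redVec_norm_one (by norm_num)
    · exact redVec_norm_one (by norm_num)
    · exact redVec_norm_one (by norm_num)
    · exact redVec_norm_one (by nlinarith [s2])
    · exact redVec_norm_one (by nlinarith [s34])
  · intro i
    fin_cases i
    · show ⟪redVec 1 0 0, redVec 0 1 0⟫ = 0
      rw [redVec_inner]; ring
    · show ⟪redVec 0 1 0, redVec (3/5) 0 (4/5)⟫ = 0
      rw [redVec_inner]; ring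
    · show ⟪redVec (3/5) 0 (4/5),
            redVec (-(2*Real.sqrt 2/5)) (Real.sqrt 2/2) (3*Real.sqrt 2/10)⟫ = 0
      rw [redVec_inner]; ring
    · show ⟪redVec (-(2*Real.sqrt 2/5)) (Real.sqrt 2/2) (3*Real.sqrt 2/10),
            redVec 0 (3*Real.sqrt 34/34) (-(5*Real.sqrt 34/34))⟫ = 0
      rw [redVec_inner]; ring
    · show ⟪redVec 0 (3*Real.sqrt 34/34) (-(5*Real.sqrt 34/34)), redVec 1 0 0⟫ = 0
      rw [redVec_inner]; ring
  · intro i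
    fin_cases i
    · show ⟪redVec 0 (3*Real.sqrt 34/34) (-(5*Real.sqrt 34/34)), redVec 0 1 0⟫ ∉ _
      rw [redVec_inner]
      refine red_notin ?_ ?_ <;> · intro h; nlinarith [s34, s34pos]
    · show ⟪redVec 1 0 0, redVec (3/5) 0 (4/5)⟫ ∉ _
      rw [redVec_inner]
      refine red_notin ?_ ?_ <;> norm_num
    · show ⟪redVec 0 1 0,
            redVec (-(2*Real.sqrt 2/5)) (Real.sqrt 2/2) (3*Real.sqrt 2/10)⟫ ∉ _
      rw [redVec_inner]
      refine red_notin ?_ ?_ <;> · intro h; nlinarith [s2, s2pos]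
    · show ⟪redVec (3/5) 0 (4/5),
            redVec 0 (3*Real.sqrt 34/34) (-(5*Real.sqrt 34/34))⟫ ∉ _
      rw [redVec_inner]
      refine red_notin ?_ ?_ <;> · intro h; nlinarith [s34, s34pos]
    · show ⟪redVec (-(2*Real.sqrt 2/5)) (Real.sqrt 2/2) (3*Real.sqrt 2/10),
            redVec 1 0 0⟫ ∉ _
      rw [redVec_inner]
      refine red_notin ?_ ?_ <;> · intro h; nlinarith [s2, s2pos]
end
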